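/- arXiv:1903.06589 — 4 statements merged into one kernel-verified Lean document; each statement's English description precedes it below -/
import Mathlib

section
/- Define polynomials R_n^k(q) by R_n^n = R_n^{n-1} = 1, R_n^k = q^{min(k-1, n-1-k)} R_{n-1}^k + R_n^{k+1} for 0 < k < n−1, and R_n^0 = R_{n-1}^0 + R_n^1. Then for all n ≥ 0, ∑_{σ ∈ S_n(213,312)} q^{cr(σ)} = R_n^0(q), and for all 1 ≤ k ≤ n, ∑_{σ ∈ S_n^{[k]}(213,312)} q^{cr(σ)} = R_n^k(q), where S_n^{[k]} is the set of σ ∈ S_n with σ(n+1−i) = i for all i ∈ [k]. -/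
open Finset Polynomial

/-- A crossing of a permutation of [n] (0-based encoding of the 1-based definition):
`i < j < σ(i) < σ(j)` or `σ(i) < σ(j) ≤ i < j` (1-based). -/
def IsCross {n : ℕ} (σ : Equiv.Perm (Fin n)) (i j : Fin n) : Prop :=
  (i < j ∧ (j : ℕ) < (σ i : ℕ) ∧ σ i < σ j) ∨
  (σ i < σ j ∧ (σ j : ℕ) ≤ (i : ℕ) ∧ i < j)

instance {n : ℕ} (σ : Equiv.Perm (Fin n)) (i j : Fin n) : Decidable (IsCross σ i j) := by
  unfold IsCross; infer_instance

/-- the number of crossings -/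
def cr {n : ℕ} (σ : Equiv.Perm (Fin n)) : ℕ :=
  (Finset.univ.filter (fun p : Fin n × Fin n => IsCross σ p.1 p.2)).card

/-- occurrence of a length-3 pattern -/
def Contains3 {n : ℕ} (σ : Equiv.Perm (Fin n)) (τ : Fin 3 → Fin 3) : Prop :=
  ∃ i j l : Fin n, i < j ∧ j < l ∧
    (τ 0 < τ 1 ↔ σ i < σ j) ∧ (τ 0 < τ 2 ↔ σ i < σ l) ∧ (τ 1 < τ 2 ↔ σ j < σ l)

instance {n : ℕ} (σ : Equiv.Perm (Fin n)) (τ : Fin 3 → Fin 3) :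
    Decidable (Contains3 σ τ) := by
  unfold Contains3; infer_instance

def Avoids {n : ℕ} (σ : Equiv.Perm (Fin n)) (τ : Fin 3 → Fin 3) : Prop := ¬ Contains3 σ τ

instance {n : ℕ} (σ : Equiv.Perm (Fin n)) (τ : Fin 3 → Fin 3) : Decidable (Avoids σ τ) := by
  unfold Avoids; infer_instance

def p123 : Fin 3 → Fin 3 := ![0, 1, 2]
def p132 : Fin 3 → Fin 3 := ![0, 2, 1]
def p213 : Fin 3 → Fin 3 := ![1, 0, 2]
def p231 : Fin 3 → Fin 3 := ![1, 2, 0]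
def p312 : Fin 3 → Fin 3 := ![2, 0, 1]
def p321 : Fin 3 → Fin 3 := ![2, 1, 0]

/-- The q-tableau of powers of two: `R n n = R n (n-1) = 1`,
`R n k = q^{min(k-1, n-1-k)} R (n-1) k + R n (k+1)` for `0 < k < n-1`, and
`R n 0 = R (n-1) 0 + R n 1`. -/
noncomputable def R : ℕ → ℕ → Polynomial ℤ
  | n, k =>
    if n ≤ k + 1 then 1
    else if k = 0 then R (n - 1) 0 + R n 1
    else Polynomial.X ^ (min (k - 1) (n - 1 - k)) * R (n - 1) k + R n (k + 1)
  termination_by n k => (n, n - k)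
  decreasing_by
  · apply Prod.Lex.left; omega
  · apply Prod.Lex.right' <;> omega
  · apply Prod.Lex.left; omega
  · apply Prod.Lex.right' <;> omega


/-- number of elements of `S` less than `v` -/
def sV (S : Finset ℕ) (v : ℕ) : ℕ := (S.filter (· < v)).card

/-- position of value `v` in the unimodal permutation encoded by `S` -/
def gN (n : ℕ) (S : Finset ℕ) (v : ℕ) : ℕ :=
  if v ∈ S then n - 1 - sV S v else v - sV S v

lemma sV_le_card (S : Finset ℕ) (v : ℕ) : sV S v ≤ S.card :=
  card_le_card (filter_subset _ _)

lemma sV_le (S : Finset ℕ) (v : ℕ) : sV S v ≤ v := by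
  classical
  have : S.filter (· < v) ⊆ range v := by
    intro u hu; simp only [mem_filter] at hu; simpa using hu.2
  simpa [sV] using card_le_card this

lemma sV_mono (S : Finset ℕ) {u v : ℕ} (h : u ≤ v) : sV S u ≤ sV S v := by
  apply card_le_card; intro x hx; simp only [mem_filter] at hx ⊢; exact ⟨hx.1, lt_of_lt_of_le hx.2 h⟩

lemma sV_strict (S : Finset ℕ) {b v : ℕ} (hb : b ∈ S) (h : b < v) : sV S b < sV S v := by
  apply card_lt_card
  constructor
  · intro x hx; simp only [mem_filter] at hx ⊢; exact ⟨hx.1, hx.2.trans h⟩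
  · intro hsub
    have := hsub (by simp [mem_filter, hb, h] : b ∈ S.filter (· < v))
    simp [mem_filter] at this
lemma sV_lt_card (S : Finset ℕ) {v : ℕ} (hv : v ∈ S) : sV S v < S.card := by
  apply card_lt_card
  constructor
  · exact filter_subset _ _
  · intro hsub
    have := hsub hv
    simp [mem_filter] at this

lemma range_filter_mem (S : Finset ℕ) (v : ℕ) :
    (range v).filter (· ∈ S) = S.filter (· < v) := by
  ext u; simp [mem_filter, and_comm]

lemma card_range_filter_not (S : Finset ℕ) (v : ℕ) :
    ((range v).filter (· ∉ S)).card = v - sV S v := by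
  classical
  have h := card_filter_add_card_filter_not (s := range v) (p := (· ∈ S))
  rw [range_filter_mem, card_range] at h
  unfold sV
  omega

lemma sV_full {S : Finset ℕ} {m : ℕ} (hS : S ⊆ range m) : sV S m = S.card := by
  unfold sV
  congr 1
  apply filter_true_of_mem
  intro u hu; simpa using hS hu

lemma sV_eq_self {S : Finset ℕ} {v : ℕ} (h : ∀ u < v, u ∈ S) : sV S v = v := by
  have h1 : S.filter (· < v) = range v := by
    ext u; simp only [mem_filter, mem_range]
    exact ⟨fun h => h.2, fun hu => ⟨h u hu, hu⟩⟩
  simp [sV, h1]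

section
variable {n : ℕ} {S : Finset ℕ}

lemma card_le_of_subset_range (hS : S ⊆ range (n-1)) : S.card ≤ n - 1 := by
  simpa using card_le_card hS

lemma gN_lt (hS : S ⊆ range (n-1)) {v : ℕ} (hv : v < n) : gN n S v < n := by
  unfold gN
  split
  · omega
  · have := sV_le S v; omega

lemma gN_mem_ge (hS : S ⊆ range (n-1)) {v : ℕ} (hv : v ∈ S) : n - S.card ≤ gN n S v := by
  have h1 := sV_lt_card S hv
  have h2 := card_le_of_subset_range hS
  simp only [gN, if_pos hv]
  omega

lemma gN_not_le (hS : S ⊆ range (n-1)) {v : ℕ} (hv : v ∉ S) (hvn : v ≤ n - 1) :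
    gN n S v ≤ n - 1 - S.card := by
  simp only [gN, if_neg hv]
  have h1 : ((range v).filter (· ∉ S)).card ≤ ((range (n-1)).filter (· ∉ S)).card := by
    apply card_le_card
    apply filter_subset_filter
    exact range_subset_range.mpr hvn
  rw [card_range_filter_not, card_range_filter_not, sV_full hS] at h1
  omega

lemma gN_not_lt_not {u v : ℕ} (hu : u ∉ S) (hv : v ∉ S) (huv : u < v) :
    gN n S u < gN n S v := by
  simp only [gN, if_neg hu, if_neg hv]
  rw [← card_range_filter_not, ← card_range_filter_not]
  have h1 : insert u ((range u).filter (· ∉ S)) ⊆ (range v).filter (· ∉ S) := by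
    intro x hx
    simp only [mem_insert, mem_filter, mem_range] at hx ⊢
    rcases hx with rfl | ⟨h2, h3⟩
    · exact ⟨huv, hu⟩
    · exact ⟨by omega, h3⟩
  have h2 := card_le_card h1
  rw [card_insert_of_notMem (by simp)] at h2
  omega

lemma gN_not_lt_mem (hS : S ⊆ range (n-1)) {u v : ℕ} (hu : u ∉ S) (hun : u ≤ n - 1)
    (hv : v ∈ S) : gN n S u < gN n S v := by
  have h1 := gN_not_le hS hu hun
  have h2 := gN_mem_ge hS hv
  have h3 := card_le_of_subset_range hS
  have h4 : v < n - 1 := by simpa using hS hv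
  omega

lemma gN_mem_lt_mem (hS : S ⊆ range (n-1)) {u v : ℕ} (hu : u ∈ S) (hv : v ∈ S)
    (huv : u < v) : gN n S v < gN n S u := by
  have h1 := sV_strict S hu huv
  have h2 := sV_lt_card S hv
  have h3 := card_le_of_subset_range hS
  simp only [gN, if_pos hu, if_pos hv]
  omega

lemma gN_not_lt_gN (hS : S ⊆ range (n-1)) {u v : ℕ} (hu : u ∉ S) (huv : u < v)
    (hvn : v ≤ n - 1) : gN n S u < gN n S v := by
  by_cases hv : v ∈ S
  · exact gN_not_lt_mem hS hu (by omega) hv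
  · exact gN_not_lt_not hu hv huv

lemma gN_inj (hS : S ⊆ range (n-1)) {u v : ℕ} (hu : u < n) (hv : v < n) (huv : u ≠ v) :
    gN n S u ≠ gN n S v := by
  rcases Nat.lt_or_ge u v with h | h
  · by_cases h1 : u ∈ S
    · by_cases h2 : v ∈ S
      · exact (gN_mem_lt_mem hS h1 h2 h).ne'
      · exact (gN_not_lt_mem hS h2 (by omega) h1).ne'
    · exact (gN_not_lt_gN hS h1 h (by omega)).ne
  · have h' : v < u := by omega
    by_cases h1 : v ∈ S
    · by_cases h2 : u ∈ S
      · exact (gN_mem_lt_mem hS h1 h2 h').ne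
      · exact (gN_not_lt_mem hS h2 (by omega) h1).ne
    · exact (gN_not_lt_gN hS h1 h' (by omega)).ne'

/-- the inverse of the unimodal permutation, as a map on `Fin n` -/
def gF (n : ℕ) (S : Finset ℕ) (hS : S ⊆ range (n-1)) : Fin n → Fin n :=
  fun v => ⟨gN n S ↑v, gN_lt hS v.isLt⟩

lemma gF_inj (hS : S ⊆ range (n-1)) : Function.Injective (gF n S hS) := by
  intro u v h
  by_contra hne
  exact gN_inj hS u.isLt v.isLt (fun hh => hne (Fin.ext hh)) (congrArg Fin.val h)

/-- the unimodal permutation encoded by `S` -/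
noncomputable def piS (n : ℕ) (S : Finset ℕ) (hS : S ⊆ range (n-1)) : Equiv.Perm (Fin n) :=
  (Equiv.ofBijective _ (Finite.injective_iff_bijective.mp (gF_inj hS))).symm

lemma piS_symm_apply (hS : S ⊆ range (n-1)) (v : Fin n) :
    (piS n S hS).symm v = gF n S hS v := rfl

lemma piS_apply_gF (hS : S ⊆ range (n-1)) (v : Fin n) :
    piS n S hS (gF n S hS v) = v := by
  have := (piS n S hS).apply_symm_apply v
  rwa [piS_symm_apply] at this

lemma gF_piS (hS : S ⊆ range (n-1)) (i : Fin n) :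
    gF n S hS (piS n S hS i) = i := by
  have := (piS n S hS).symm_apply_apply i
  rwa [piS_symm_apply] at this

lemma card_univ_filter (n : ℕ) (P : ℕ → Prop) [DecidablePred P] :
    ((univ : Finset (Fin n)).filter (fun b => P b.val)).card = ((range n).filter P).card := by
  refine card_bij (fun b _ => (b : ℕ)) ?_ ?_ ?_
  · intro b hb; simp only [mem_filter, mem_univ, true_and] at hb
    simp [mem_filter, b.isLt, hb]
  · intro a _ b _ h; exact Fin.ext h
  · intro c hc
    simp only [mem_filter, mem_range] at hc
    exact ⟨⟨c, hc.1⟩, by simp [mem_filter, hc.2], rfl⟩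

lemma card_filter_gN_lt (hS : S ⊆ range (n-1)) {a : ℕ} (ha : a ≤ n) :
    ((univ : Finset (Fin n)).filter (fun b => gN n S b.val < a)).card = a := by
  have key : ((univ : Finset (Fin n)).filter (fun b => gN n S b.val < a)).card
      = ((univ : Finset (Fin n)).filter (fun c : Fin n => c.val < a)).card := by
    apply card_bij' (fun b _ => gF n S hS b) (fun c _ => piS n S hS c)
    · intro b hb; simp only [mem_filter, mem_univ, true_and] at hb ⊢; exact hb
    · intro c hc; simp only [mem_filter, mem_univ, true_and] at hc ⊢
      have : gN n S (piS n S hS c).val = ↑(gF n S hS (piS n S hS c)) := rfl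
      rw [this, gF_piS hS]; exact hc
    · intro b _; exact piS_apply_gF hS b
    · intro c _; exact gF_piS hS c
  rw [key, card_univ_filter n (fun x => x < a)]
  have : (range n).filter (· < a) = range a := by
    ext u; simp only [mem_filter, mem_range]; omega
  rw [this, card_range]

end

section
variable {n : ℕ} {S : Finset ℕ}

lemma card_range_filter_le (m c : ℕ) : ((range m).filter (fun t => c ≤ t)).card = m - c := by
  have : (range m).filter (fun t => c ≤ t) = Finset.Ico c m := by
    ext u; simp only [mem_filter, mem_range, mem_Ico]; omega
  rw [this, Nat.card_Ico]

lemma sV_injOn (S : Finset ℕ) : Set.InjOn (sV S) S := by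
  intro u hu v hv h
  by_contra hne
  rcases Nat.lt_or_ge u v with hlt | hge
  · exact absurd h (sV_strict S hu hlt).ne
  · exact absurd h.symm (sV_strict S hv (by omega)).ne

lemma image_sV_filter (S : Finset ℕ) (a : ℕ) :
    (S.filter (· < a)).image (sV S) = range (sV S a) := by
  apply eq_of_subset_of_card_le
  · intro t ht
    simp only [mem_image, mem_filter] at ht
    obtain ⟨b, ⟨hb, hba⟩, rfl⟩ := ht
    simpa using sV_strict S hb hba
  · rw [card_range, card_image_of_injOn ((sV_injOn S).mono (by
      intro x hx; exact (mem_filter.mp hx).1))]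
    rfl

lemma card_A2 (S : Finset ℕ) (a c : ℕ) :
    ((S.filter (· < a)).filter (fun b => c ≤ sV S b)).card = sV S a - c := by
  have h1 : ((S.filter (· < a)).filter (fun b => c ≤ sV S b)).image (sV S)
      = (range (sV S a)).filter (fun t => c ≤ t) := by
    rw [← image_sV_filter S a, Finset.filter_image]
  have h2 : Set.InjOn (sV S) ((S.filter (· < a)).filter (fun b => c ≤ sV S b)) := by
    apply (sV_injOn S).mono
    intro x hx
    exact (mem_filter.mp (mem_filter.mp hx).1).1
  rw [← card_image_of_injOn h2, h1, card_range_filter_le]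

/-- the per-value crossing count -/
lemma crossing_count (hS : S ⊆ range (n-1)) {a : ℕ} (ha : a < n) :
    ((range n).filter (fun b =>
        (gN n S a < gN n S b ∧ gN n S b < a ∧ a < b) ∨
        (a < b ∧ b ≤ gN n S a ∧ gN n S a < gN n S b))).card
      = if a ∈ S then 0 else min (sV S a - 1) (n - 1 - a) := by
  by_cases haS : a ∈ S
  · rw [if_pos haS]
    rw [card_eq_zero, filter_eq_empty_iff]
    intro b hb
    simp only [mem_range] at hb
    have key : a < b → gN n S b < gN n S a := by
      intro hab
      by_cases hbS : b ∈ S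
      · exact gN_mem_lt_mem hS haS hbS hab
      · exact gN_not_lt_mem hS hbS (by omega) haS
    rintro (⟨h1, _, h3⟩ | ⟨h3, _, h1⟩) <;> · have := key h3; omega
  · rw [if_neg haS]
    have ha' : a ≤ n - 1 := by omega
    have hsa := sV_le S a
    have hsc := sV_le_card S a
    have hcard := card_le_of_subset_range hS
    -- simplify the condition
    have hcong : (range n).filter (fun b =>
        (gN n S a < gN n S b ∧ gN n S b < a ∧ a < b) ∨
        (a < b ∧ b ≤ gN n S a ∧ gN n S a < gN n S b))
        = (range n).filter (fun b => gN n S b < a ∧ a < b) := by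
      apply filter_congr
      intro b hb
      simp only [mem_range] at hb
      have himp : a < b → gN n S a < gN n S b := by
        intro hab
        by_cases hbS : b ∈ S
        · exact gN_not_lt_mem hS haS ha' hbS
        · exact gN_not_lt_not haS hbS hab
      have hga : gN n S a ≤ a := by simp only [gN, if_neg haS]; omega
      constructor
      · rintro (⟨_, h2, h3⟩ | ⟨h1, h2, _⟩)
        · exact ⟨h2, h3⟩
        · omega
      · rintro ⟨h1, h2⟩
        exact Or.inl ⟨himp h2, h1, h2⟩
    rw [hcong]
    -- total count of b with gN b < a
    have htot : ((range n).filter (fun b => gN n S b < a)).card = a := by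
      rw [← card_univ_filter n (fun b => gN n S b < a)]
      exact card_filter_gN_lt hS (by omega)
    -- split by b ≤ a
    have hsplit : ((range n).filter (fun b => gN n S b < a ∧ b ≤ a)).card
        + ((range n).filter (fun b => gN n S b < a ∧ a < b)).card = a := by
      have h := card_filter_add_card_filter_not
        (s := (range n).filter (fun b => gN n S b < a)) (p := (· ≤ a))
      rw [filter_filter, filter_filter, htot] at h
      have e1 : (range n).filter (fun b => gN n S b < a ∧ b ≤ a)
          = (range n).filter (fun b => gN n S b < a ∧ (fun x => x ≤ a) b) := by
        apply filter_congr; intro b _; simp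
      have e2 : (range n).filter (fun b => gN n S b < a ∧ a < b)
          = (range n).filter (fun b => gN n S b < a ∧ (fun x => ¬ x ≤ a) b) := by
        apply filter_congr; intro b _; constructor
        · rintro ⟨u,v⟩; exact ⟨u, by omega⟩
        · rintro ⟨u,v⟩; exact ⟨u, by omega⟩
      rw [e1, e2, h]
    -- compute the "≤ a" part
    have hle : ((range n).filter (fun b => gN n S b < a ∧ b ≤ a)).card
        = (a - sV S a) + (sV S a - (n - a)) + (if 1 ≤ sV S a then 1 else 0) := by
      have hdecomp : (range n).filter (fun b => gN n S b < a ∧ b ≤ a)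
          = ((range a).filter (· ∉ S)) ∪ ((S.filter (· < a)).filter (fun b => n - a ≤ sV S b))
            ∪ (if 1 ≤ sV S a then {a} else ∅) := by
        ext b
        simp only [mem_union, mem_filter, mem_range]
        constructor
        · rintro ⟨hbn, hg, hba⟩
          rcases Nat.eq_or_lt_of_le hba with rfl | hba'
          · right
            have : 1 ≤ sV S b := by
              simp only [gN, if_neg haS] at hg; omega
            simp [this]
          · by_cases hbS : b ∈ S
            · left; right
              refine ⟨⟨hbS, hba'⟩, ?_⟩
              have h1 := sV_lt_card S hbS
              simp only [gN, if_pos hbS] at hg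
              omega
            · left; left; exact ⟨hba', hbS⟩
        · rintro ((⟨hba, hbS⟩ | ⟨⟨hbS, hba⟩, hsb⟩) | hA3)
          · refine ⟨by omega, ?_, by omega⟩
            simp only [gN, if_neg hbS]
            have := sV_le S b
            omega
          · have hbn : b < n - 1 := by simpa using hS hbS
            refine ⟨by omega, ?_, by omega⟩
            simp only [gN, if_pos hbS]
            have h1 := sV_lt_card S hbS
            omega
          · split at hA3
            · rename_i hsv
              simp only [mem_singleton] at hA3
              subst hA3
              refine ⟨ha, ?_, le_refl _⟩
              simp only [gN, if_neg haS]
              omega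
            · simp at hA3
      rw [hdecomp]
      have hd1 : Disjoint ((range a).filter (· ∉ S))
          ((S.filter (· < a)).filter (fun b => n - a ≤ sV S b)) := by
        rw [disjoint_left]
        intro x hx hy
        exact (mem_filter.mp hx).2 (mem_filter.mp (mem_filter.mp hy).1).1
      have hd2 : Disjoint (((range a).filter (· ∉ S)) ∪ ((S.filter (· < a)).filter (fun b => n - a ≤ sV S b)))
          (if 1 ≤ sV S a then ({a} : Finset ℕ) else ∅) := by
        rw [disjoint_right]
        intro x hx hy
        split at hx
        · simp only [mem_singleton] at hx
          rw [hx] at hy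
          rcases mem_union.mp hy with h | h
          · exact absurd (mem_range.mp (mem_filter.mp h).1) (lt_irrefl a)
          · exact absurd (mem_filter.mp (mem_filter.mp h).1).2 (lt_irrefl a)
        · simp at hx
      rw [card_union_of_disjoint hd2, card_union_of_disjoint hd1]
      rw [card_range_filter_not, card_A2]
      congr 1
      split <;> simp
    by_cases hsv : 1 ≤ sV S a
    · rw [if_pos hsv] at hle
      omega
    · rw [if_neg hsv] at hle
      omega

end

section
variable {n : ℕ} {S : Finset ℕ}

lemma gN_piS_apply (hS : S ⊆ range (n-1)) (x : Fin n) :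
    gN n S ((piS n S hS) x).val = x.val :=
  congrArg Fin.val (gF_piS hS x)

lemma gN_symm_apply (hS : S ⊆ range (n-1)) (x : Fin n) :
    ((piS n S hS).symm x).val = gN n S x.val := by
  rw [piS_symm_apply]; rfl

lemma cr_piS (hS : S ⊆ range (n-1)) :
    cr (piS n S hS) = ∑ v ∈ range n, (if v ∈ S then 0 else min (sV S v - 1) (n - 1 - v)) := by
  classical
  set σ := piS n S hS with hσ
  have stepA : cr σ = ((univ : Finset (Fin n × Fin n)).filter (fun p =>
      (gN n S p.1.val < gN n S p.2.val ∧ gN n S p.2.val < p.1.val ∧ p.1 < p.2) ∨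
      (p.1 < p.2 ∧ p.2.val ≤ gN n S p.1.val ∧ gN n S p.1.val < gN n S p.2.val))).card := by
    unfold cr
    apply card_bij' (fun (p : Fin n × Fin n) _ => (σ p.1, σ p.2))
      (fun (p : Fin n × Fin n) _ => (σ.symm p.1, σ.symm p.2))
    · intro p hp
      simp only [mem_filter, mem_univ, true_and] at hp ⊢
      simp only [IsCross] at hp ⊢
      rw [gN_piS_apply hS, gN_piS_apply hS]
      simp only [Fin.lt_def] at hp ⊢
      tauto
    · intro p hp
      simp only [mem_filter, mem_univ, true_and] at hp ⊢
      simp only [IsCross] at hp ⊢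
      rw [Equiv.apply_symm_apply, Equiv.apply_symm_apply]
      simp only [Fin.lt_def, hσ, gN_symm_apply hS] at hp ⊢
      tauto
    · intro p _; exact Prod.ext (σ.symm_apply_apply p.1) (σ.symm_apply_apply p.2)
    · intro p _; exact Prod.ext (σ.apply_symm_apply p.1) (σ.apply_symm_apply p.2)
  rw [stepA]
  rw [Finset.card_filter]
  rw [Fintype.sum_prod_type]
  have stepC : ∀ a : Fin n,
      (∑ b : Fin n, if ((gN n S a.val < gN n S b.val ∧ gN n S b.val < a.val ∧ a < b) ∨
        (a < b ∧ b.val ≤ gN n S a.val ∧ gN n S a.val < gN n S b.val)) then 1 else 0)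
      = if a.val ∈ S then 0 else min (sV S a.val - 1) (n - 1 - a.val) := by
    intro a
    rw [← Finset.card_filter]
    have e1 : (univ : Finset (Fin n)).filter (fun b =>
        (gN n S a.val < gN n S b.val ∧ gN n S b.val < a.val ∧ a < b) ∨
        (a < b ∧ b.val ≤ gN n S a.val ∧ gN n S a.val < gN n S b.val))
        = (univ : Finset (Fin n)).filter (fun b =>
        (gN n S a.val < gN n S b.val ∧ gN n S b.val < a.val ∧ a.val < b.val) ∨
        (a.val < b.val ∧ b.val ≤ gN n S a.val ∧ gN n S a.val < gN n S b.val)) := by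
      apply filter_congr
      intro b _
      simp only [Fin.lt_def]
    rw [e1]
    rw [card_univ_filter n (fun x =>
        (gN n S a.val < gN n S x ∧ gN n S x < a.val ∧ a.val < x) ∨
        (a.val < x ∧ x ≤ gN n S a.val ∧ gN n S a.val < gN n S x))]
    exact crossing_count hS a.isLt
  rw [Finset.sum_congr rfl (fun a (_ : a ∈ univ) => stepC a)]
  exact Fin.sum_univ_eq_sum_range (fun v => if v ∈ S then 0 else min (sV S v - 1) (n - 1 - v)) n

end

section
variable {n : ℕ} {S : Finset ℕ}

lemma gN_master (hS : S ⊆ range (n-1)) {a b v : ℕ} (han : a < n) (hvn : v < n)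
    (hba : b < a) (hbv : b < v)
    (h1 : gN n S a < gN n S b) (h2 : gN n S b < gN n S v) : False := by
  by_cases hb : b ∈ S
  · have : gN n S v < gN n S b := by
      by_cases hv : v ∈ S
      · exact gN_mem_lt_mem hS hb hv hbv
      · exact gN_not_lt_mem hS hv (by omega) hb
    omega
  · have : gN n S b < gN n S a := gN_not_lt_gN hS hb hba (by omega)
    omega

lemma piS_avoids (hS : S ⊆ range (n-1)) :
    Avoids (piS n S hS) p213 ∧ Avoids (piS n S hS) p312 := by
  set σ := piS n S hS with hσ
  have master : ∀ i j l : Fin n, i < j → j < l → σ j < σ i → σ j < σ l → False := by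
    intro i j l hij hjl h1 h2
    have e1 : gN n S (σ i).val = i.val := gN_piS_apply hS i
    have e2 : gN n S (σ j).val = j.val := gN_piS_apply hS j
    have e3 : gN n S (σ l).val = l.val := gN_piS_apply hS l
    refine gN_master hS (σ i).isLt (σ l).isLt (a := (σ i).val) (b := (σ j).val)
      (v := (σ l).val) h1 h2 ?_ ?_
    · rw [e1, e2]; exact hij
    · rw [e2, e3]; exact hjl
  constructor
  · rintro ⟨i, j, l, hij, hjl, hc1, hc2, hc3⟩
    have t1 : ¬ (p213 0 < p213 1) := by decide
    have t3 : p213 1 < p213 2 := by decide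
    have hji : σ j < σ i := by
      have h : ¬ (σ i < σ j) := fun h => t1 (hc1.mpr h)
      have hne : σ i ≠ σ j := fun h => hij.ne (σ.injective h)
      exact lt_of_le_of_ne (not_lt.mp h) (Ne.symm hne)
    exact master i j l hij hjl hji (hc3.mp t3)
  · rintro ⟨i, j, l, hij, hjl, hc1, hc2, hc3⟩
    have t1 : ¬ (p312 0 < p312 1) := by decide
    have t3 : p312 1 < p312 2 := by decide
    have hji : σ j < σ i := by
      have h : ¬ (σ i < σ j) := fun h => t1 (hc1.mpr h)
      have hne : σ i ≠ σ j := fun h => hij.ne (σ.injective h)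
      exact lt_of_le_of_ne (not_lt.mp h) (Ne.symm hne)
    exact master i j l hij hjl hji (hc3.mp t3)

end

section
variable {n : ℕ} {S : Finset ℕ}

lemma gF_eq_iff (hS : S ⊆ range (n-1)) {i : Fin n} :
    piS n S hS (Fin.rev i) = i ↔ gN n S i.val = n - (i.val + 1) := by
  constructor
  · intro h
    have h2 : gF n S hS i = Fin.rev i := by
      apply (piS n S hS).injective
      rw [piS_apply_gF, h]
    have := congrArg Fin.val h2
    rwa [Fin.val_rev] at this
  · intro h
    have h2 : gF n S hS i = Fin.rev i := by
      apply Fin.ext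
      rw [Fin.val_rev]
      exact h
    rw [← h2, piS_apply_gF]

lemma piS_tail (hS : S ⊆ range (n-1)) {k : ℕ} (hk : k ≤ n) :
    (∀ i : Fin n, (i : ℕ) < k → piS n S hS (Fin.rev i) = i) ↔
      (range (min k (n-1)) ⊆ S) := by
  constructor
  · intro h
    intro v hv
    simp only [mem_range] at hv
    -- strong induction
    induction v using Nat.strong_induction_on with
    | _ v ih =>
      by_contra hvS
      have hall : ∀ u < v, u ∈ S := fun u hu => ih u hu (by omega)
      have hsv : sV S v = v := sV_eq_self hall
      have hvn : v < n := by omega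
      have hv1 : v < n - 1 := lt_of_lt_of_le hv (min_le_right _ _)
      have heq := (gF_eq_iff hS (i := ⟨v, hvn⟩)).mp (h ⟨v, hvn⟩ (by simp; omega))
      simp only [Fin.val_mk] at heq
      rw [gN] at heq
      rw [if_neg hvS] at heq
      rw [hsv] at heq
      omega
  · intro hmem i hik
    apply (gF_eq_iff hS).mpr
    by_cases hv : i.val < n - 1
    · have hiS : i.val ∈ S := hmem (by simp; omega)
      have hsv : sV S i.val = i.val := sV_eq_self (fun u hu => hmem (by simp; omega))
      simp only [gN, if_pos hiS, hsv]
      omega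
    · -- i.val = n - 1, so k = n and S = range (n-1)
      have hin : i.val = n - 1 := by have := i.isLt; omega
      have hkn : k = n := by have := i.isLt; omega
      have hSfull : S = range (n-1) := by
        apply Finset.Subset.antisymm hS
        intro u hu
        exact hmem (by simp only [mem_range] at hu ⊢; omega)
      have hnotmem : i.val ∉ S := by
        rw [hSfull]; simp [hin]
      have hsv : sV S i.val = n - 1 := by
        rw [hin, sV_full hS, hSfull, card_range]
      simp only [gN, if_neg hnotmem, hsv]
      omega

end

section
variable {n : ℕ}

/-- the set of values that are not left-to-right maxima (as natural numbers) -/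
def PsiN (σ : Equiv.Perm (Fin n)) : Finset ℕ :=
  (Finset.univ.filter (fun v : Fin n => ∃ i, i < σ.symm v ∧ v < σ i)).image Fin.val

lemma mem_PsiN {σ : Equiv.Perm (Fin n)} {v : Fin n} :
    v.val ∈ PsiN σ ↔ ∃ i, i < σ.symm v ∧ v < σ i := by
  unfold PsiN
  simp only [mem_image, mem_filter, mem_univ, true_and]
  constructor
  · rintro ⟨u, hu, huv⟩
    rwa [show u = v from Fin.ext huv] at hu
  · intro h
    exact ⟨v, h, rfl⟩

lemma mem_PsiN' {σ : Equiv.Perm (Fin n)} {x : ℕ} :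
    x ∈ PsiN σ ↔ ∃ hx : x < n, ∃ i, i < σ.symm ⟨x, hx⟩ ∧ (⟨x, hx⟩ : Fin n) < σ i := by
  constructor
  · intro h
    obtain ⟨u, hu, rfl⟩ := mem_image.mp h
    simp only [mem_filter, mem_univ, true_and] at hu
    exact ⟨u.isLt, by simpa only [Fin.eta] using hu⟩
  · rintro ⟨hx, h⟩
    exact mem_PsiN.mpr h

lemma PsiN_subset (σ : Equiv.Perm (Fin n)) : PsiN σ ⊆ range (n-1) := by
  intro x hx
  obtain ⟨hx', i, _, hvi⟩ := mem_PsiN'.mp hx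
  have h1 : x < (σ i).val := hvi
  have h2 : (σ i).val < n := (σ i).isLt
  simp only [mem_range]
  omega

lemma card_filter_perm_lt (τ : Equiv.Perm (Fin n)) {a : ℕ} (ha : a ≤ n) :
    ((univ : Finset (Fin n)).filter (fun w => (τ w).val < a)).card = a := by
  have key : ((univ : Finset (Fin n)).filter (fun w => (τ w).val < a)).card
      = ((univ : Finset (Fin n)).filter (fun c : Fin n => c.val < a)).card := by
    apply card_bij' (fun b _ => τ b) (fun c _ => τ.symm c)
    · intro b hb; simp only [mem_filter, mem_univ, true_and] at hb ⊢; exact hb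
    · intro c hc; simp only [mem_filter, mem_univ, true_and] at hc ⊢
      rwa [τ.apply_symm_apply]
    · intro b _; exact τ.symm_apply_apply b
    · intro c _; exact τ.apply_symm_apply c
  rw [key, card_univ_filter n (fun x => x < a)]
  have : (range n).filter (· < a) = range a := by
    ext u; simp only [mem_filter, mem_range]; omega
  rw [this, card_range]

lemma card_filter_perm_gt (τ : Equiv.Perm (Fin n)) {a : ℕ} (ha : a < n) :
    ((univ : Finset (Fin n)).filter (fun w => a < (τ w).val)).card = n - 1 - a := by
  have h := card_filter_add_card_filter_not
    (s := (univ : Finset (Fin n))) (p := fun w => (τ w).val < a + 1)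
  rw [card_filter_perm_lt τ (by omega)] at h
  rw [card_univ] at h
  simp only [Fintype.card_fin] at h
  have e : (univ : Finset (Fin n)).filter (fun w => ¬ (τ w).val < a + 1)
      = (univ : Finset (Fin n)).filter (fun w => a < (τ w).val) := by
    apply filter_congr; intro w _; constructor <;> (intro; omega)
  rw [e] at h
  omega

/-- every avoider of 213 and 312 is the unimodal permutation of its non-LR-max set -/
lemma avoider_symm_eq {σ : Equiv.Perm (Fin n)} (h213 : Avoids σ p213) (h312 : Avoids σ p312)
    (v : Fin n) : (σ.symm v).val = gN n (PsiN σ) v.val := by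
  classical
  set Ψ := PsiN σ with hΨ
  have hΨsub := PsiN_subset σ
  -- B' : everything after the position of a non-LR-max is smaller
  have hB' : ∀ v : Fin n, (∃ i, i < σ.symm v ∧ v < σ i) → ∀ l, σ.symm v < l → σ l < v := by
    rintro v ⟨i₀, hi₀, hvi₀⟩ l hl
    by_contra hc
    have hne : σ l ≠ v := by
      intro h
      have : l = σ.symm v := by rw [← h, Equiv.symm_apply_apply]
      omega
    have hvl : v < σ l := lt_of_le_of_ne (not_lt.mp hc) (Ne.symm hne)
    rcases lt_trichotomy (σ i₀) (σ l) with hio | hio | hio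
    · apply h213
      refine ⟨i₀, σ.symm v, l, hi₀, hl, ?_, ?_, ?_⟩
      · rw [Equiv.apply_symm_apply]
        constructor
        · intro h; exact absurd h (by decide)
        · intro h; omega
      · constructor
        · intro _; exact hio
        · intro _; decide
      · rw [Equiv.apply_symm_apply]
        constructor
        · intro _; exact hvl
        · intro _; decide
    · exact absurd (σ.injective hio) (by omega)
    · apply h312
      refine ⟨i₀, σ.symm v, l, hi₀, hl, ?_, ?_, ?_⟩
      · rw [Equiv.apply_symm_apply]
        constructor
        · intro h; exact absurd h (by decide)
        · intro h; omega
      · constructor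
        · intro h; exact absurd h (by decide)
        · intro h; omega
      · rw [Equiv.apply_symm_apply]
        constructor
        · intro _; exact hvl
        · intro _; decide
  -- A : non-LR-maxima positions are increasing in value
  have hA : ∀ u v : Fin n, ¬ (∃ i, i < σ.symm u ∧ u < σ i) → u < v → σ.symm u < σ.symm v := by
    intro u v hu huv
    rcases lt_trichotomy (σ.symm u) (σ.symm v) with h | h | h
    · exact h
    · exact absurd (σ.symm.injective h) (by omega)
    · exact absurd ⟨σ.symm v, h, by rwa [Equiv.apply_symm_apply]⟩ hu
  have hB : ∀ u v : Fin n, (∃ i, i < σ.symm u ∧ u < σ i) → u < v → σ.symm v < σ.symm u := by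
    intro u v hu huv
    rcases lt_trichotomy (σ.symm v) (σ.symm u) with h | h | h
    · exact h
    · exact absurd (σ.symm.injective h) (by omega)
    · have := hB' u hu (σ.symm v) h
      rw [Equiv.apply_symm_apply] at this
      omega
  by_cases hvΨ : v.val ∈ Ψ
  · -- v is a non-LR-max : position is n - 1 - sV
    obtain ⟨i, hi, hvi⟩ := (mem_PsiN (σ := σ)).mp hvΨ
    have hset : (univ : Finset (Fin n)).filter (fun w => (σ.symm v).val < (σ.symm w).val)
        = (univ : Finset (Fin n)).filter (fun w => w.val ∈ Ψ ∧ w.val < v.val) := by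
      apply filter_congr
      intro w _
      constructor
      · intro h
        have hwv : w ≠ v := by intro he; rw [he] at h; omega
        have hwΨ : w.val ∈ Ψ := by
          by_contra hw
          rcases lt_trichotomy w v with hlt | he | hgt
          · have := hA w v (fun hc => hw (mem_PsiN.mpr hc)) hlt
            omega
          · exact hwv he
          · have := hB v w ⟨i, hi, hvi⟩ hgt
            omega
        refine ⟨hwΨ, ?_⟩
        rcases lt_trichotomy w v with hlt | he | hgt
        · exact hlt
        · exact absurd he hwv
        · have := hB v w ⟨i, hi, hvi⟩ hgt; omega
      · rintro ⟨hwΨ, hwv⟩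
        obtain ⟨iw, hiw1, hiw2⟩ := (mem_PsiN (σ := σ)).mp hwΨ
        have := hB w v ⟨iw, hiw1, hiw2⟩ (by exact hwv)
        omega
    have hcard1 := card_filter_perm_gt σ.symm (a := (σ.symm v).val) (σ.symm v).isLt
    have e1 : ((univ : Finset (Fin n)).filter (fun w => (σ.symm v).val < (σ.symm w).val)).card
        = sV Ψ v.val := by
      rw [hset, card_univ_filter n (fun x => x ∈ Ψ ∧ x < v.val)]
      have : (range n).filter (fun x => x ∈ Ψ ∧ x < v.val) = Ψ.filter (· < v.val) := by
        ext x
        simp only [mem_filter, mem_range]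
        constructor
        · rintro ⟨_, h1, h2⟩; exact ⟨h1, h2⟩
        · rintro ⟨h1, h2⟩
          have : x < n - 1 := by simpa using hΨsub h1
          exact ⟨by omega, h1, h2⟩
      rw [this]; rfl
    rw [e1] at hcard1
    have hlt : (σ.symm v).val < n := (σ.symm v).isLt
    have hsv : sV Ψ v.val ≤ n - 1 := le_trans (sV_le_card _ _) (card_le_of_subset_range hΨsub)
    rw [gN, if_pos hvΨ]
    omega
  · -- v is a LR-max : position is v - sV
    have hset : (univ : Finset (Fin n)).filter (fun w => (σ.symm w).val < (σ.symm v).val)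
        = (univ : Finset (Fin n)).filter (fun w => w.val ∉ Ψ ∧ w.val < v.val) := by
      apply filter_congr
      intro w _
      constructor
      · intro h
        have hwv : w ≠ v := by intro he; rw [he] at h; omega
        have hwΨ : w.val ∉ Ψ := by
          intro hw
          obtain ⟨iw, hiw1, hiw2⟩ := (mem_PsiN (σ := σ)).mp hw
          rcases lt_trichotomy w v with hlt | he | hgt
          · have := hB w v ⟨iw, hiw1, hiw2⟩ hlt
            omega
          · exact hwv he
          · have := hA v w (fun hc => hvΨ (mem_PsiN.mpr hc)) hgt
            omega
        refine ⟨hwΨ, ?_⟩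
        rcases lt_trichotomy w v with hlt | he | hgt
        · exact hlt
        · exact absurd he hwv
        · have := hA v w (fun hc => hvΨ (mem_PsiN.mpr hc)) hgt; omega
      · rintro ⟨hwΨ, hwv⟩
        have := hA w v (fun hc => hwΨ (mem_PsiN.mpr hc)) (by exact hwv)
        omega
    have hcard1 := card_filter_perm_lt σ.symm (a := (σ.symm v).val) (le_of_lt (σ.symm v).isLt)
    have e1 : ((univ : Finset (Fin n)).filter (fun w => (σ.symm w).val < (σ.symm v).val)).card
        = v.val - sV Ψ v.val := by
      rw [hset, card_univ_filter n (fun x => x ∉ Ψ ∧ x < v.val)]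
      have : (range n).filter (fun x => x ∉ Ψ ∧ x < v.val) = (range v.val).filter (· ∉ Ψ) := by
        ext x
        simp only [mem_filter, mem_range]
        have := v.isLt
        constructor
        · rintro ⟨_, h1, h2⟩; exact ⟨h2, h1⟩
        · rintro ⟨h1, h2⟩; exact ⟨by omega, h2, h1⟩
      rw [this, card_range_filter_not]
    rw [e1] at hcard1
    rw [gN, if_neg hvΨ]
    omega

lemma avoider_eq_piS {σ : Equiv.Perm (Fin n)} (h213 : Avoids σ p213) (h312 : Avoids σ p312) :
    σ = piS n (PsiN σ) (PsiN_subset σ) := by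
  have hfun : ∀ v : Fin n, σ.symm v = gF n (PsiN σ) (PsiN_subset σ) v := by
    intro v
    apply Fin.ext
    exact avoider_symm_eq h213 h312 v
  apply Equiv.ext
  intro i
  have h1 : gF n (PsiN σ) (PsiN_subset σ) (σ i) = i := by
    rw [← hfun (σ i), Equiv.symm_apply_apply]
  calc σ i = piS n (PsiN σ) (PsiN_subset σ) (gF n (PsiN σ) (PsiN_subset σ) (σ i)) := by
        rw [piS_apply_gF]
    _ = piS n (PsiN σ) (PsiN_subset σ) i := by rw [h1]
  
lemma PsiN_piS {S : Finset ℕ} (hS : S ⊆ range (n-1)) : PsiN (piS n S hS) = S := by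
  classical
  ext x
  rw [mem_PsiN']
  constructor
  · rintro ⟨hx, i, hi1, hi2⟩
    rw [piS_symm_apply] at hi1
    set u := piS n S hS i with hu
    have hiu : i = gF n S hS u := (gF_piS hS i).symm
    rw [hiu] at hi1
    -- gF u < gF ⟨x,hx⟩ and ⟨x,hx⟩ < u
    by_contra hxS
    have hvu : x < u.val := hi2
    have hgg : gN n S x < gN n S u.val := gN_not_lt_gN hS hxS hvu (by have := u.isLt; omega)
    have : gN n S u.val < gN n S x := hi1
    omega
  · intro hxS
    have hx : x < n - 1 := by simpa using hS hxS
    have hxn : x < n := by omega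
    refine ⟨hxn, ?_⟩
    have hn1 : n - 1 < n := by omega
    have hpeak : (n:ℕ) - 1 ∉ S := fun h => by simpa using hS h
    refine ⟨gF n S hS ⟨n-1, hn1⟩, ?_, ?_⟩
    · rw [piS_symm_apply]
      show gN n S (n-1) < gN n S x
      have h1 := gN_not_le hS hpeak (le_refl _)
      have h2 := gN_mem_ge hS hxS
      have h3 := card_le_of_subset_range hS
      have h4 : 1 ≤ S.card := card_pos.mpr ⟨x, hxS⟩
      omega
    · rw [piS_apply_gF]
      exact hx

end

/-- the crossing statistic of a subset -/
def statn (n : ℕ) (S : Finset ℕ) : ℕ :=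
  ∑ v ∈ range n, (if v ∈ S then 0 else min (sV S v - 1) (n - 1 - v))

/-- the subset-sum side -/
noncomputable def Tpoly (n k : ℕ) : Polynomial ℤ :=
  ∑ S ∈ (range (n-1)).powerset.filter (fun S => range (min k (n-1)) ⊆ S),
    (X : Polynomial ℤ) ^ (statn n S)

lemma statn_full (n : ℕ) : statn n (range (n-1)) = 0 := by
  apply Finset.sum_eq_zero
  intro v hv
  simp only [mem_range] at hv
  by_cases h : v ∈ range (n-1)
  · rw [if_pos h]
  · rw [if_neg h]
    simp only [mem_range] at h
    have : n - 1 - v = 0 := by omega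
    omega

lemma Tpoly_base {n k : ℕ} (h : n ≤ k + 1) (hk : k ≤ n) : Tpoly n k = 1 := by
  unfold Tpoly
  have hmin : min k (n-1) = n - 1 := by omega
  rw [hmin]
  have hfilter : (range (n-1)).powerset.filter (fun S => range (n-1) ⊆ S)
      = {range (n-1)} := by
    ext S
    simp only [mem_filter, mem_powerset, mem_singleton]
    constructor
    · rintro ⟨h1, h2⟩; exact Finset.Subset.antisymm h1 h2
    · rintro rfl; exact ⟨Finset.Subset.refl _, Finset.Subset.refl _⟩
  rw [hfilter, sum_singleton, statn_full, pow_zero]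

/-- downward shift map -/
def dkm (k : ℕ) (x : ℕ) : ℕ := if k < x then x - 1 else x
/-- upward shift map -/
def ukm (k : ℕ) (x : ℕ) : ℕ := if k ≤ x then x + 1 else x

lemma dk_injOn {S : Finset ℕ} {k : ℕ} (hk : k ∉ S) :
    ∀ u ∈ S, ∀ v ∈ S, dkm k u = dkm k v → u = v := by
  intro u hu v hv h
  have hu' : u ≠ k := fun he => hk (he ▸ hu)
  have hv' : v ≠ k := fun he => hk (he ▸ hv)
  unfold dkm at h
  split at h <;> split at h <;> omega

lemma sV_image_dk {S : Finset ℕ} {k v : ℕ} (hk : k ∉ S) (hv : k < v) :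
    sV (S.image (dkm k)) (v - 1) = sV S v := by
  classical
  unfold sV
  rw [Finset.filter_image]
  rw [card_image_of_injOn (fun u hu v' hv' h => dk_injOn hk u (mem_filter.mp hu).1 v' (mem_filter.mp hv').1 h)]
  congr 1
  apply filter_congr
  intro u hu
  have hu' : u ≠ k := fun he => hk (he ▸ hu)
  unfold dkm
  split <;> constructor <;> (intro; omega)

lemma statn_shift {n k : ℕ} {S : Finset ℕ} (hS : S ⊆ range (n-1)) (hk1 : range k ⊆ S)
    (hk2 : k ∉ S) (hkn : k + 1 < n) :
    statn n S = min (k-1) (n-1-k) + statn (n-1) (S.image (dkm k)) := by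
  classical
  have hsk : sV S k = k := sV_eq_self (fun u hu => hk1 (mem_range.mpr hu))
  have hkr : k ∈ range n := mem_range.mpr (by omega)
  unfold statn
  rw [← Finset.sum_erase_add (range n) _ hkr]
  rw [if_neg hk2, hsk]
  rw [Nat.add_comm]
  congr 1
  -- ∑ v in (range n).erase k, F n S v = ∑ w in range (n-1), F (n-1) S' w
  apply Finset.sum_bij' (fun v _ => dkm k v) (fun w _ => ukm k w)
  · intro v hv
    simp only [mem_erase, mem_range] at hv
    simp only [mem_range]
    unfold dkm
    split <;> omega
  · intro w hw
    simp only [mem_range] at hw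
    simp only [mem_erase, mem_range]
    unfold ukm
    split <;> omega
  · intro v hv
    simp only [mem_erase, mem_range] at hv
    unfold dkm ukm
    split <;> split <;> omega
  · intro w hw
    simp only [mem_range] at hw
    unfold dkm ukm
    split <;> split <;> omega
  · intro v hv
    simp only [mem_erase, mem_range] at hv
    by_cases hvS : v ∈ S
    · have h1 : dkm k v ∈ S.image (dkm k) := mem_image_of_mem _ hvS
      rw [if_pos hvS, if_pos h1]
    · have hvk : k < v := by
        rcases Nat.lt_or_ge v k with h | h
        · exact absurd (hk1 (mem_range.mpr h)) hvS
        · omega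
      have h1 : dkm k v ∉ S.image (dkm k) := by
        intro hmem
        obtain ⟨u, hu, huv⟩ := mem_image.mp hmem
        have hu' : u ≠ k := fun he => hk2 (he ▸ hu)
        have huv' : u = v := by
          unfold dkm at huv
          split at huv <;> omega
        exact hvS (huv' ▸ hu)
      rw [if_neg hvS, if_neg h1]
      have hdk : dkm k v = v - 1 := by unfold dkm; rw [if_pos hvk]
      rw [hdk, sV_image_dk hk2 hvk]
      have : n - 1 - 1 - (v - 1) = n - 1 - v := by omega
      rw [this]

lemma ukm_dkm_id {S : Finset ℕ} {k : ℕ} (hk : k ∉ S) :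
    S.image (ukm k ∘ dkm k) = S := by
  have : ∀ x ∈ S, (ukm k ∘ dkm k) x = x := by
    intro x hx
    have hx' : x ≠ k := fun he => hk (he ▸ hx)
    simp only [Function.comp, dkm, ukm]
    split <;> split <;> omega
  calc S.image (ukm k ∘ dkm k) = S.image id := Finset.image_congr this
    _ = S := Finset.image_id

lemma dkm_ukm_id {S : Finset ℕ} (k : ℕ) :
    S.image (dkm k ∘ ukm k) = S := by
  have : ∀ x ∈ S, (dkm k ∘ ukm k) x = x := by
    intro x _
    simp only [Function.comp, dkm, ukm]
    split <;> split <;> omega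
  calc S.image (dkm k ∘ ukm k) = S.image id := Finset.image_congr this
    _ = S := Finset.image_id

lemma Tpoly_rec {n k : ℕ} (h : k + 1 < n) :
    Tpoly n k = X ^ (min (k-1) (n-1-k)) * Tpoly (n-1) k + Tpoly n (k+1) := by
  classical
  have hmin : min k (n-1) = k := by omega
  have hmin1 : min (k+1) (n-1) = k+1 := by omega
  have hmin2 : min k (n-1-1) = k := by omega
  unfold Tpoly
  rw [hmin, hmin1, hmin2]
  rw [← Finset.sum_filter_add_sum_filter_not
    ((range (n-1)).powerset.filter (fun S => range k ⊆ S)) (fun S => k ∈ S)]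
  rw [add_comm (X ^ (min (k-1) (n-1-k)) * ∑ S ∈ (range (n-1-1)).powerset.filter
      (fun S => range k ⊆ S), (X : Polynomial ℤ) ^ (statn (n-1) S))]
  congr 1
  · -- k ∈ S part equals Tpoly n (k+1)
    apply Finset.sum_congr
    · rw [filter_filter]
      apply filter_congr
      intro S hS
      rw [Finset.range_add_one, Finset.insert_subset_iff]
      tauto
    · intro _ _; rfl
  · -- k ∉ S part
    rw [Finset.mul_sum]
    apply Finset.sum_bij' (fun S _ => S.image (dkm k)) (fun S' _ => S'.image (ukm k))
    · intro S hS
      rw [filter_filter] at hS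
      simp only [mem_filter, mem_powerset] at hS
      rw [Finset.image_image, ukm_dkm_id hS.2.2]
    · intro S' _
      rw [Finset.image_image, dkm_ukm_id]
    · intro S hS
      rw [filter_filter] at hS
      simp only [mem_filter, mem_powerset] at hS
      obtain ⟨hsub, hrange, hkS⟩ := hS
      rw [statn_shift hsub hrange hkS h, pow_add]
    · intro S hS
      rw [filter_filter] at hS
      simp only [mem_filter, mem_powerset] at hS
      obtain ⟨hsub, hrange, hkS⟩ := hS
      simp only [mem_filter, mem_powerset]
      constructor
      · intro y hy
        obtain ⟨x, hx, rfl⟩ := mem_image.mp hy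
        have hx1 : x < n - 1 := by simpa using hsub hx
        have hx2 : x ≠ k := fun he => hkS (he ▸ hx)
        simp only [mem_range]
        unfold dkm
        split <;> omega
      · intro y hy
        simp only [mem_range] at hy
        apply mem_image.mpr
        refine ⟨y, hrange (mem_range.mpr hy), ?_⟩
        unfold dkm
        rw [if_neg (by omega)]
    · intro S' hS'
      simp only [mem_filter, mem_powerset] at hS'
      obtain ⟨hsub, hrange⟩ := hS'
      rw [filter_filter]
      simp only [mem_filter, mem_powerset]
      refine ⟨?_, ?_, ?_⟩
      · intro y hy
        obtain ⟨x, hx, rfl⟩ := mem_image.mp hy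
        have hx1 : x < n - 1 - 1 := by simpa using hsub hx
        simp only [mem_range]
        unfold ukm
        split <;> omega
      · intro y hy
        simp only [mem_range] at hy
        apply mem_image.mpr
        refine ⟨y, hrange (mem_range.mpr hy), ?_⟩
        unfold ukm
        rw [if_neg (by omega)]
      · intro hmem
        obtain ⟨x, _, hx⟩ := mem_image.mp hmem
        unfold ukm at hx
        split at hx <;> omega

theorem Tpoly_eq_R : ∀ n k : ℕ, k ≤ n → Tpoly n k = R n k := by
  intro n
  induction n using Nat.strong_induction_on with
  | _ n ihn =>
    have aux : ∀ j k, k ≤ n → n - k ≤ j → Tpoly n k = R n k := by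
      intro j
      induction j with
      | zero =>
        intro k hk hj
        have hkn : k = n := by omega
        subst hkn
        rw [Tpoly_base (by omega) le_rfl, R]
        simp
      | succ j ihj =>
        intro k hk hj
        by_cases hbase : n ≤ k + 1
        · rw [Tpoly_base hbase hk, R]
          simp [hbase]
        · have hk1 : k + 1 < n := by omega
          rw [Tpoly_rec hk1]
          rw [ihj (k+1) (by omega) (by omega)]
          rw [ihn (n-1) (by omega) k (by omega)]
          -- now show R n k = X^e * R (n-1) k + R n (k+1)
          conv_rhs => rw [R]
          rw [if_neg (by omega)]
          by_cases hk0 : k = 0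
          · subst hk0
            rw [if_pos rfl]
            have : min (0 - 1) (n - 1 - 0) = 0 := by simp
            rw [this, pow_zero, one_mul]
          · rw [if_neg hk0]
    intro k hk
    exact aux (n - k) k hk le_rfl

lemma perm_sum_eq (n k : ℕ) (hk : k ≤ n) :
    (∑ σ ∈ Finset.univ.filter (fun σ : Equiv.Perm (Fin n) =>
        (Avoids σ p213 ∧ Avoids σ p312) ∧ ∀ i : Fin n, (i : ℕ) < k → σ (Fin.rev i) = i),
      (X : Polynomial ℤ) ^ cr σ) = Tpoly n k := by
  classical
  unfold Tpoly
  refine Finset.sum_bij' (i := fun σ _ => PsiN σ)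
    (j := fun S hS => piS n S (mem_powerset.mp (mem_filter.mp hS).1)) ?hi ?hj ?li ?ri ?hh
  case li =>
    intro σ hσ
    simp only [mem_filter, mem_univ, true_and] at hσ
    exact (avoider_eq_piS hσ.1.1 hσ.1.2).symm
  case ri =>
    intro S hS
    exact PsiN_piS _
  case hh =>
    intro σ hσ
    simp only [mem_filter, mem_univ, true_and] at hσ
    have heq := avoider_eq_piS hσ.1.1 hσ.1.2
    have hcr : cr σ = statn n (PsiN σ) := by
      conv_lhs => rw [heq]
      rw [cr_piS]
      rfl
    rw [hcr]
  case hi =>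
    intro σ hσ
    simp only [mem_filter, mem_univ, true_and] at hσ
    obtain ⟨⟨h213, h312⟩, htail⟩ := hσ
    simp only [mem_filter, mem_powerset]
    refine ⟨PsiN_subset σ, ?_⟩
    have heq := avoider_eq_piS h213 h312
    rw [heq] at htail
    exact (piS_tail (PsiN_subset σ) hk).mp htail
  case hj =>
    intro S hS
    simp only [mem_filter, mem_powerset] at hS
    simp only [mem_filter, mem_univ, true_and]
    exact ⟨piS_avoids _, (piS_tail _ hk).mpr hS.2⟩

theorem stmt12' (n : ℕ) :
    (∑ σ ∈ Finset.univ.filter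
          (fun σ : Equiv.Perm (Fin n) => Avoids σ p213 ∧ Avoids σ p312),
        (Polynomial.X : Polynomial ℤ) ^ cr σ) = R n 0 ∧
    ∀ k : ℕ, 1 ≤ k → k ≤ n →
      (∑ σ ∈ Finset.univ.filter (fun σ : Equiv.Perm (Fin n) =>
            (Avoids σ p213 ∧ Avoids σ p312) ∧ ∀ i : Fin n, (i : ℕ) < k → σ (Fin.rev i) = i),
          (Polynomial.X : Polynomial ℤ) ^ cr σ) = R n k := by
  constructor
  · have h0 := perm_sum_eq n 0 (Nat.zero_le n)
    have e : Finset.univ.filter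
          (fun σ : Equiv.Perm (Fin n) => Avoids σ p213 ∧ Avoids σ p312)
        = Finset.univ.filter (fun σ : Equiv.Perm (Fin n) =>
            (Avoids σ p213 ∧ Avoids σ p312) ∧ ∀ i : Fin n, (i : ℕ) < 0 → σ (Fin.rev i) = i) := by
      apply filter_congr
      intro σ _
      constructor
      · intro h; exact ⟨h, fun i hi => absurd hi (by omega)⟩
      · intro h; exact h.1
    rw [e, h0, Tpoly_eq_R n 0 (Nat.zero_le n)]
  · intro k _ h2
    rw [perm_sum_eq n k h2, Tpoly_eq_R n k h2]
theorem stmt12 (n : ℕ) :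
    (∑ σ ∈ Finset.univ.filter
          (fun σ : Equiv.Perm (Fin n) => Avoids σ p213 ∧ Avoids σ p312),
        (Polynomial.X : Polynomial ℤ) ^ cr σ) = R n 0 ∧
    ∀ k : ℕ, 1 ≤ k → k ≤ n →
      (∑ σ ∈ Finset.univ.filter (fun σ : Equiv.Perm (Fin n) =>
            (Avoids σ p213 ∧ Avoids σ p312) ∧ ∀ i : Fin n, (i : ℕ) < k → σ (Fin.rev i) = i),
          (Polynomial.X : Polynomial ℤ) ^ cr σ) = R n k := stmt12' n
end

section
/- The number of permutations of [n] avoiding both 213 and 312 that have no crossings equals C(n,2) + 1 (the n-th central polygonal number). -/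
open Finset Polynomial

def Good {n : ℕ} (σ : Equiv.Perm (Fin n)) : Prop :=
  (∀ i j l : Fin n, i < j → j < l → σ j < σ i → σ j < σ l → False) ∧
  (∀ i j : Fin n, ¬ IsCross σ i j)

lemma good_iff {n : ℕ} (σ : Equiv.Perm (Fin n)) :
    (Avoids σ p213 ∧ Avoids σ p312 ∧ cr σ = 0) ↔ Good σ := by
  have hcr : cr σ = 0 ↔ ∀ i j : Fin n, ¬ IsCross σ i j := by
    rw [cr, Finset.card_eq_zero, Finset.filter_eq_empty_iff]
    constructor
    · intro h i j hc; exact h (Finset.mem_univ (i, j)) hc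
    · intro h p _; exact h p.1 p.2
  constructor
  · rintro ⟨h1, h2, h3⟩
    refine ⟨?_, hcr.mp h3⟩
    intro i j l hij hjl hji hjil
    rcases lt_or_gt_of_ne (σ.injective.ne (show i ≠ l by intro h; subst h; exact absurd (hij.trans hjl) (lt_irrefl _))) with h | h
    · exact h1 ⟨i, j, l, hij, hjl,
        iff_of_false (by decide) (not_lt.mpr hji.le),
        iff_of_true (by decide) h,
        iff_of_true (by decide) hjil⟩
    · exact h2 ⟨i, j, l, hij, hjl,
        iff_of_false (by decide) (not_lt.mpr hji.le),
        iff_of_false (by decide) (not_lt.mpr h.le),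
        iff_of_true (by decide) hjil⟩
  · rintro ⟨h1, h2⟩
    refine ⟨?_, ?_, hcr.mpr h2⟩
    · rintro ⟨i, j, l, hij, hjl, e1, e2, e3⟩
      have t1 : ¬ ((p213 0 : Fin 3) < p213 1) := by decide
      have t2 : (p213 0 : Fin 3) < p213 2 := by decide
      have t3 : (p213 1 : Fin 3) < p213 2 := by decide
      have hji : σ j < σ i := by
        rcases lt_or_gt_of_ne (σ.injective.ne (show i ≠ j from ne_of_lt hij)) with h | h
        · exact absurd (e1.mpr h) t1
        · exact h
      exact h1 i j l hij hjl hji (e3.mp t3)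
    · rintro ⟨i, j, l, hij, hjl, e1, e2, e3⟩
      have t1 : ¬ ((p312 0 : Fin 3) < p312 1) := by decide
      have t2 : ¬ ((p312 0 : Fin 3) < p312 2) := by decide
      have t3 : (p312 1 : Fin 3) < p312 2 := by decide
      have hji : σ j < σ i := by
        rcases lt_or_gt_of_ne (σ.injective.ne (show i ≠ j from ne_of_lt hij)) with h | h
        · exact absurd (e1.mpr h) t1
        · exact h
      exact h1 i j l hij hjl hji (e3.mp t3)

def cycFun (n : ℕ) (m : ℕ) (hm : m < n) : Fin (n+1) → Fin (n+1) := fun i =>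
  if h1 : (i : ℕ) < m then ⟨i+1, by omega⟩
  else if h2 : (i : ℕ) = n then ⟨0, by omega⟩
  else ⟨n + m - i, by have := i.isLt; omega⟩

lemma cycFun_inj (n m : ℕ) (hm : m < n) : Function.Injective (cycFun n m hm) := by
  intro i j h
  have hi := i.isLt; have hj := j.isLt
  unfold cycFun at h
  split_ifs at h <;> (apply Fin.ext; simp only [Fin.mk.injEq] at h; omega)

noncomputable def cyc (n : ℕ) (m : Fin n) : Equiv.Perm (Fin (n+1)) :=
  Equiv.ofBijective (cycFun n m m.isLt) (Finite.injective_iff_bijective.mp (cycFun_inj n m m.isLt))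

lemma cyc_val (n : ℕ) (m : Fin n) (i : Fin (n+1)) :
    ((cyc n m i : Fin (n+1)) : ℕ) =
      if (i : ℕ) < (m : ℕ) then (i : ℕ)+1 else if (i : ℕ) = n then 0 else n + m - i := by
  show ((cycFun n m m.isLt i : Fin (n+1)) : ℕ) = _
  unfold cycFun
  split_ifs <;> rfl

lemma cyc_good (n : ℕ) (m : Fin n) : Good (cyc n m) := by
  have hm := m.isLt
  constructor
  · intro i j l hij hjl h1 h2
    have hi := i.isLt; have hj := j.isLt; have hl := l.isLt
    rw [Fin.lt_def] at hij hjl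
    simp only [Fin.lt_def, cyc_val] at h1 h2
    split_ifs at h1 h2 <;> omega
  · intro i j h
    have hi := i.isLt; have hj := j.isLt
    simp only [IsCross, Fin.lt_def, cyc_val] at h
    rcases h with ⟨h1, h2, h3⟩ | ⟨h1, h2, h3⟩ <;> (split_ifs at h1 h2 h3 <;> omega)

lemma cyc_zero_ne (n : ℕ) (m : Fin n) : cyc n m 0 ≠ 0 := by
  have hm := m.isLt
  intro h
  have := congrArg Fin.val h
  rw [cyc_val] at this
  split_ifs at this <;> simp only [Fin.val_zero] at * <;> omega

lemma cyc_inj (n : ℕ) : Function.Injective (cyc n) := by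
  intro m m' h
  have hm := m.isLt; have hm' := m'.isLt
  apply Fin.ext
  by_contra hne
  have h1 : ((cyc n m) ⟨m, by omega⟩ : ℕ) = ((cyc n m') ⟨m, by omega⟩ : ℕ) := by rw [h]
  rw [cyc_val, cyc_val] at h1
  simp only [Fin.val_mk] at h1
  split_ifs at h1 <;> omega

lemma complete {n : ℕ} (σ : Equiv.Perm (Fin (n+1))) (hg : Good σ) (h0 : σ 0 ≠ 0) :
    ∃ m : Fin n, σ = cyc n m := by
  obtain ⟨hpat, hcr⟩ := hg
  have hn : 0 < n := by
    rcases Nat.eq_zero_or_pos n with h | h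
    · subst h
      exact absurd (Fin.ext (by have := (σ 0).isLt; omega)) h0
    · exact h
  -- Step 1 : σ last = 0
  have hlast : σ (Fin.last n) = 0 := by
    obtain ⟨p, hσp⟩ : ∃ p, σ p = 0 := ⟨σ.symm 0, σ.apply_symm_apply 0⟩
    have hp0 : p ≠ 0 := by intro h; exact h0 (h ▸ hσp)
    by_contra hne
    have hpl : p ≠ Fin.last n := by intro h; apply hne; rw [← hσp, h]
    have hppos : (0 : Fin (n+1)) < p := Fin.pos_of_ne_zero hp0
    have hplt : p < Fin.last n := lt_of_le_of_ne (Fin.le_last p) hpl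
    have h1 : σ p < σ 0 := by
      rw [hσp]; exact Fin.pos_of_ne_zero h0
    have h2 : σ p < σ (Fin.last n) := by
      rw [hσp]
      refine Fin.pos_of_ne_zero ?_
      intro h
      exact hpl (σ.injective (hσp.trans h.symm))
    exact hpat 0 p (Fin.last n) hppos hplt h1 h2
  -- the preimage of the max
  obtain ⟨M, hσM⟩ : ∃ M, σ M = Fin.last n := ⟨σ.symm _, σ.apply_symm_apply _⟩
  have hMne : M ≠ Fin.last n := by
    intro h
    rw [h, hlast] at hσM
    have := congrArg Fin.val hσM
    simp at this; omega
  have hMlt : (M : ℕ) < n := by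
    have := M.isLt
    have : (M : ℕ) ≠ n := by intro h; exact hMne (Fin.ext (by simp [h]))
    omega
  -- increasing up to M
  have incr : ∀ i j : Fin (n+1), i < j → (j : ℕ) ≤ (M : ℕ) → σ i < σ j := by
    intro i j hij hjM
    rcases lt_or_gt_of_ne (σ.injective.ne (ne_of_lt hij)) with h | h
    · exact h
    · exfalso
      rcases eq_or_lt_of_le hjM with hjM' | hjM'
      · have : j = M := Fin.ext hjM'
        subst this
        rw [hσM] at h
        exact absurd (Fin.le_last (σ i)) (not_le.mpr h)
      · refine hpat i j M hij (Fin.lt_def.mpr hjM') h ?_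
        rw [hσM]
        refine lt_of_le_of_ne (Fin.le_last _) ?_
        intro hh
        exact (Fin.lt_def.mpr hjM').ne (σ.injective (hh.trans hσM.symm))
  -- decreasing from M on
  have decr : ∀ i j : Fin (n+1), (M : ℕ) ≤ (i : ℕ) → i < j → σ j < σ i := by
    intro i j hMi hij
    rcases lt_or_gt_of_ne (σ.injective.ne (ne_of_lt hij)) with h | h
    · exfalso
      have hiM : M < i := by
        rcases eq_or_lt_of_le hMi with h' | h'
        · exfalso
          have : M = i := Fin.ext h'
          subst this
          rw [hσM] at h
          exact absurd (Fin.le_last (σ j)) (not_le.mpr h)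
        · exact Fin.lt_def.mpr h'
      refine hpat M i j hiM hij ?_ h
      rw [hσM]
      refine lt_of_le_of_ne (Fin.le_last _) ?_
      intro hh
      exact hiM.ne (σ.injective (hσM.trans hh.symm))
    · exact h
  -- values on the initial segment
  have step5 : ∀ k : ℕ, (hk : k < (M : ℕ)) → (σ ⟨k, by omega⟩ : ℕ) = k + 1 := by
    intro k
    induction k with
    | zero =>
      intro hk
      have hz : (⟨0, by omega⟩ : Fin (n+1)) = 0 := rfl
      rw [hz]
      have hge : 1 ≤ (σ 0 : ℕ) := by
        have := Fin.pos_of_ne_zero h0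
        exact Fin.lt_def.mp this
      by_contra hne2
      have hgt : 1 < (σ 0 : ℕ) := by omega
      have e0 : ((0 : Fin (n+1)) : ℕ) = 0 := rfl
      have e1 : ((⟨1, by omega⟩ : Fin (n+1)) : ℕ) = 1 := rfl
      refine hcr 0 ⟨1, by omega⟩ (Or.inl ⟨?_, ?_, ?_⟩)
      · exact Fin.lt_def.mpr (by omega)
      · omega
      · exact incr 0 ⟨1, by omega⟩ (Fin.lt_def.mpr (by omega)) (by omega)
    | succ k ih =>
      intro hk
      have hprev := ih (by omega)
      have ek : ((⟨k, by omega⟩ : Fin (n+1)) : ℕ) = k := rfl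
      have ek1 : ((⟨k+1, by omega⟩ : Fin (n+1)) : ℕ) = k+1 := rfl
      have ek2 : ((⟨k+2, by omega⟩ : Fin (n+1)) : ℕ) = k+2 := rfl
      have h1 : σ ⟨k, by omega⟩ < σ ⟨k+1, by omega⟩ :=
        incr _ _ (Fin.lt_def.mpr (by omega)) (by omega)
      have hge : k + 2 ≤ (σ ⟨k+1, by omega⟩ : ℕ) := by
        have := Fin.lt_def.mp h1
        omega
      by_contra hne2
      have hgt : k + 2 < (σ ⟨k+1, by omega⟩ : ℕ) := by omega
      refine hcr ⟨k+1, by omega⟩ ⟨k+2, by omega⟩ (Or.inl ⟨?_, ?_, ?_⟩)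
      · exact Fin.lt_def.mpr (by omega)
      · omega
      · exact incr _ _ (Fin.lt_def.mpr (by omega)) (by omega)
  -- values on the decreasing segment
  have step6 : ∀ k : ℕ, (hk : (M : ℕ) + k < n) → (σ ⟨(M : ℕ) + k, by omega⟩ : ℕ) = n - k := by
    intro k
    induction k with
    | zero =>
      intro hk
      have : (⟨(M : ℕ) + 0, by omega⟩ : Fin (n+1)) = M := Fin.ext (by simp)
      rw [this, hσM]
      simp
    | succ k ih =>
      intro hk
      have hprev := ih (by omega)
      have hub : (σ ⟨(M : ℕ) + k + 1, by omega⟩ : ℕ) ≤ n - k - 1 := by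
        have hd : σ ⟨(M : ℕ) + (k+1), by omega⟩ < σ ⟨(M : ℕ) + k, by omega⟩ :=
          decr _ _ (by simp only [Fin.val_mk]; omega) (Fin.lt_def.mpr (by simp only [Fin.val_mk]; omega))
        have := Fin.lt_def.mp hd
        have he : ((M : ℕ) + (k+1)) = (M : ℕ) + k + 1 := by omega
        simp only [he] at this ⊢
        omega
      -- the preimage of the value n - k - 1
      obtain ⟨q, hσq'⟩ : ∃ q, σ q = ⟨n - k - 1, by omega⟩ := ⟨σ.symm _, σ.apply_symm_apply _⟩
      have hσq : (σ q : ℕ) = n - k - 1 := by rw [hσq']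
      have hvgtM : (M : ℕ) < n - k - 1 := by omega
      have hqM : (M : ℕ) ≤ (q : ℕ) := by
        by_contra hlt
        have := step5 q (by omega)
        have hqe : (⟨(q : ℕ), by omega⟩ : Fin (n+1)) = q := Fin.ext rfl
        rw [hqe] at this
        omega
      have hqlast : (q : ℕ) ≠ n := by
        intro h
        have : q = Fin.last n := Fin.ext h
        rw [this, hlast] at hσq
        simp at hσq
        omega
      have hqle : (q : ℕ) ≤ (M : ℕ) + k + 1 := by
        by_contra hgt
        have hd : σ q < σ ⟨(M : ℕ) + k + 1, by omega⟩ :=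
          decr _ _ (by simp only [Fin.val_mk]; omega) (Fin.lt_def.mpr (by simp only [Fin.val_mk]; omega))
        have := Fin.lt_def.mp hd
        omega
      have hqge : (M : ℕ) + k + 1 ≤ (q : ℕ) := by
        by_contra hlt
        rcases Nat.lt_or_ge (q : ℕ) ((M : ℕ) + k) with h' | h'
        · have hd : σ ⟨(M : ℕ) + k, by omega⟩ < σ q :=
            decr _ _ (by omega) (Fin.lt_def.mpr (by simp; omega))
          have := Fin.lt_def.mp hd
          omega
        · have hqe : q = ⟨(M : ℕ) + k, by omega⟩ := Fin.ext (by simp only [Fin.val_mk]; omega)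
          rw [hqe] at hσq
          omega
      have hqeq : q = ⟨(M : ℕ) + k + 1, by omega⟩ := Fin.ext (by simp only [Fin.val_mk]; omega)
      rw [hqeq] at hσq
      have he : ((M : ℕ) + (k+1)) = (M : ℕ) + k + 1 := by omega
      simp only [he]
      omega
  -- conclude
  refine ⟨⟨(M : ℕ), hMlt⟩, ?_⟩
  apply Equiv.ext
  intro i
  apply Fin.ext
  rw [cyc_val]
  have hi := i.isLt
  simp only []
  rcases Nat.lt_or_ge (i : ℕ) (M : ℕ) with h | h
  · rw [if_pos h]
    have hie : i = ⟨(i : ℕ), by omega⟩ := Fin.ext rfl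
    rw [hie]
    exact step5 (i : ℕ) h
  · rw [if_neg (by omega)]
    by_cases h2 : (i : ℕ) = n
    · rw [if_pos h2]
      have : i = Fin.last n := Fin.ext (by simp [h2])
      rw [this, hlast]
      rfl
    · rw [if_neg h2]
      have hie : i = ⟨(M : ℕ) + ((i : ℕ) - (M : ℕ)), by omega⟩ := Fin.ext (by simp only [Fin.val_mk]; omega)
      rw [hie]
      rw [step6 ((i : ℕ) - (M : ℕ)) (by omega)]
      omega

def emb {n : ℕ} (τ : Equiv.Perm (Fin n)) : Equiv.Perm (Fin (n+1)) :=
  Equiv.Perm.decomposeFin.symm (0, τ)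

lemma emb_zero {n : ℕ} (τ : Equiv.Perm (Fin n)) : emb τ 0 = 0 :=
  Equiv.Perm.decomposeFin_symm_apply_zero 0 τ

lemma emb_succ {n : ℕ} (τ : Equiv.Perm (Fin n)) (i : Fin n) : emb τ i.succ = (τ i).succ := by
  rw [emb, Equiv.Perm.decomposeFin_symm_apply_succ, Equiv.swap_self]
  rfl

lemma emb_inj {n : ℕ} : Function.Injective (emb (n := n)) := by
  intro a b h
  have := Equiv.Perm.decomposeFin.symm.injective (h : _)
  exact (Prod.mk.injEq _ _ _ _ ▸ this).2

lemma good_emb {n : ℕ} (τ : Equiv.Perm (Fin n)) : Good (emb τ) ↔ Good τ := by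
  constructor
  · rintro ⟨h1, h2⟩
    constructor
    · intro i j l hij hjl ha hb
      refine h1 i.succ j.succ l.succ ?_ ?_ ?_ ?_ <;>
        simp only [emb_succ, Fin.succ_lt_succ_iff] <;> assumption
    · intro i j hc
      refine h2 i.succ j.succ ?_
      rcases hc with ⟨c1, c2, c3⟩ | ⟨c1, c2, c3⟩
      · exact Or.inl ⟨Fin.succ_lt_succ_iff.mpr c1, by simp [emb_succ, Fin.val_succ]; omega,
          by simp only [emb_succ, Fin.succ_lt_succ_iff]; exact c3⟩
      · exact Or.inr ⟨by simp only [emb_succ, Fin.succ_lt_succ_iff]; exact c1,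
          by simp [emb_succ, Fin.val_succ]; omega, Fin.succ_lt_succ_iff.mpr c3⟩
  · rintro ⟨h1, h2⟩
    constructor
    · intro i j l hij hjl ha hb
      rcases Fin.eq_zero_or_eq_succ j with rfl | ⟨j', rfl⟩
      · exact absurd hij (not_lt.mpr (Fin.zero_le _))
      rcases Fin.eq_zero_or_eq_succ l with rfl | ⟨l', rfl⟩
      · exact absurd hjl (not_lt.mpr (Fin.zero_le _))
      rcases Fin.eq_zero_or_eq_succ i with rfl | ⟨i', rfl⟩
      · rw [emb_zero, emb_succ] at ha
        exact absurd ha (not_lt.mpr (Fin.zero_le _))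
      simp only [emb_succ, Fin.succ_lt_succ_iff] at ha hb
      exact h1 i' j' l' (Fin.succ_lt_succ_iff.mp hij) (Fin.succ_lt_succ_iff.mp hjl) ha hb
    · intro i j hc
      rcases Fin.eq_zero_or_eq_succ j with rfl | ⟨j', rfl⟩
      · rcases hc with ⟨c1, _⟩ | ⟨_, _, c1⟩ <;> exact absurd c1 (not_lt.mpr (Fin.zero_le _))
      rcases Fin.eq_zero_or_eq_succ i with rfl | ⟨i', rfl⟩
      · simp only [IsCross, emb_zero, emb_succ] at hc
        rcases hc with ⟨_, c2, _⟩ | ⟨c1, c2, _⟩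
        · simp at c2
        · simp [Fin.val_succ] at c2
      simp only [IsCross, emb_succ] at hc
      refine h2 i' j' ?_
      rcases hc with ⟨c1, c2, c3⟩ | ⟨c1, c2, c3⟩
      · exact Or.inl ⟨Fin.succ_lt_succ_iff.mp c1, by simp [Fin.val_succ] at c2; omega,
          Fin.succ_lt_succ_iff.mp c3⟩
      · exact Or.inr ⟨Fin.succ_lt_succ_iff.mp c1, by simp [Fin.val_succ] at c2; omega,
          Fin.succ_lt_succ_iff.mp c3⟩

theorem stmt14 (n : ℕ) :
    (Finset.univ.filter (fun σ : Equiv.Perm (Fin n) =>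
        Avoids σ p213 ∧ Avoids σ p312 ∧ cr σ = 0)).card = n.choose 2 + 1 := by
  classical
  have key : ∀ m : ℕ, (Finset.univ.filter (fun σ : Equiv.Perm (Fin m) => Good σ)).card
      = m.choose 2 + 1 := by
    intro m
    induction m with
    | zero =>
      rw [show (Finset.univ.filter (fun σ : Equiv.Perm (Fin 0) => Good σ)) = Finset.univ from ?_]
      · simp [Fintype.card_equiv]
      · apply Finset.filter_true_of_mem
        intro σ _
        exact ⟨fun i => i.elim0, fun i => i.elim0⟩
    | succ m ih =>
      have hsplit := Finset.card_filter_add_card_filter_not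
        (s := Finset.univ.filter (fun σ : Equiv.Perm (Fin (m+1)) => Good σ))
        (fun σ => σ 0 = 0)
      rw [Finset.filter_filter, Finset.filter_filter] at hsplit
      have hA : (Finset.univ.filter (fun σ : Equiv.Perm (Fin (m+1)) => Good σ ∧ σ 0 = 0)).card
          = m.choose 2 + 1 := by
        rw [show Finset.univ.filter (fun σ : Equiv.Perm (Fin (m+1)) => Good σ ∧ σ 0 = 0)
            = Finset.image emb (Finset.univ.filter (fun τ : Equiv.Perm (Fin m) => Good τ)) from ?_]
        · rw [Finset.card_image_of_injective _ emb_inj, ih]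
        · ext σ
          simp only [Finset.mem_filter, Finset.mem_univ, true_and, Finset.mem_image]
          constructor
          · rintro ⟨hg, h0⟩
            have he : Equiv.Perm.decomposeFin.symm
                ((Equiv.Perm.decomposeFin σ).1, (Equiv.Perm.decomposeFin σ).2) = σ := by
              rw [Prod.mk.eta]; exact Equiv.symm_apply_apply _ _
            have h1 : (Equiv.Perm.decomposeFin σ).1 = σ 0 := by
              conv_rhs => rw [← he, Equiv.Perm.decomposeFin_symm_apply_zero]
            have h2 : emb (Equiv.Perm.decomposeFin σ).2 = σ := by
              rw [emb, ← (h1.trans h0)]; exact he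
            exact ⟨(Equiv.Perm.decomposeFin σ).2, (good_emb _).mp (h2 ▸ hg), h2⟩
          · rintro ⟨τ, hτ, rfl⟩
            exact ⟨(good_emb τ).mpr hτ, Equiv.Perm.decomposeFin_symm_apply_zero 0 τ⟩
      have hB : (Finset.univ.filter (fun σ : Equiv.Perm (Fin (m+1)) => Good σ ∧ ¬ σ 0 = 0)).card
          = m := by
        rw [show Finset.univ.filter (fun σ : Equiv.Perm (Fin (m+1)) => Good σ ∧ ¬ σ 0 = 0)
            = Finset.image (cyc m) Finset.univ from ?_]
        · rw [Finset.card_image_of_injective _ (cyc_inj m)]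
          simp
        · ext σ
          simp only [Finset.mem_filter, Finset.mem_univ, true_and, Finset.mem_image]
          constructor
          · rintro ⟨hg, h0⟩
            obtain ⟨mm, hmm⟩ := complete σ hg h0
            exact ⟨mm, hmm.symm⟩
          · rintro ⟨mm, rfl⟩
            exact ⟨cyc_good m mm, cyc_zero_ne m mm⟩
      rw [hA, hB] at hsplit
      rw [← hsplit]
      rw [Nat.choose_succ_succ]
      simp [Nat.choose_one_right]
      omega
  rw [Finset.filter_congr (fun σ _ => good_iff σ)]
  exact key n
end

section
/- For all n, S_n(321,231) = B_{n,1}, i.e. a permutation σ of [n] avoids both 321 and 231 if and only if i − σ(i) ≤ 1 for all i ∈ [n]. -/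
open Finset Polynomial

lemma aux_card {n : ℕ} (m : ℕ) (hm : m < n) :
    ((Finset.univ : Finset (Fin n)).filter fun v : Fin n => (v : ℕ) ≤ m).card = m + 1 := by
  have h : (Finset.univ.filter fun v : Fin n => (v : ℕ) ≤ m) = Finset.Iic ⟨m, hm⟩ := by
    ext v; simp [Fin.le_def]
  rw [h, Fin.card_Iic]

lemma aux_perm {n : ℕ} (σ : Equiv.Perm (Fin n)) (p : Fin n → Prop) [DecidablePred p] :
    ((Finset.univ : Finset (Fin n)).filter fun k => p (σ k)).card
      = (Finset.univ.filter p).card := by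
  apply Finset.card_bij (fun k _ => σ k)
  · intro a ha; simp only [Finset.mem_filter, Finset.mem_univ, true_and] at ha ⊢; exact ha
  · intro a _ b _ hab; exact σ.injective hab
  · intro b hb
    refine ⟨σ.symm b, ?_, by simp⟩
    simp only [Finset.mem_filter, Finset.mem_univ, true_and, Equiv.apply_symm_apply] at hb ⊢
    exact hb

lemma no_low {n : ℕ} (σ : Equiv.Perm (Fin n)) (h : ∀ i : Fin n, (i : ℕ) ≤ (σ i : ℕ) + 1)
    (i j l : Fin n) (hij : i < j) (hjl : j < l) (h1 : σ l < σ i) (h2 : σ l < σ j) : False := by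
  set m := (σ l : ℕ) with hm
  have hl : (l : ℕ) ≤ m + 1 := h l
  have hjm : (j : ℕ) ≤ m := by
    have := (Fin.lt_def).mp hjl; omega
  have him : (i : ℕ) ≤ m := by
    have := (Fin.lt_def).mp hij; omega
  set P := (Finset.univ : Finset (Fin n)).filter fun k => (σ k : ℕ) ≤ m with hP
  set Q := (Finset.univ : Finset (Fin n)).filter fun k : Fin n => (k : ℕ) ≤ m + 1 with hQ
  have hPcard : P.card = m + 1 := by
    rw [hP, aux_perm σ (fun v : Fin n => (v : ℕ) ≤ m), aux_card m (σ l).isLt]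
  have hiQ : i ∈ Q := by simp [hQ]; omega
  have hjQ : j ∈ Q := by simp [hQ]; omega
  have hsub : P ⊆ Q \ {i, j} := by
    intro k hk
    simp only [hP, Finset.mem_filter, Finset.mem_univ, true_and] at hk
    have hk1 : (k : ℕ) ≤ m + 1 := le_trans (h k) (by omega)
    have hki : k ≠ i := fun e => absurd (e ▸ hk) (by
      simp only [not_le]; exact (Fin.lt_def).mp h1)
    have hkj : k ≠ j := fun e => absurd (e ▸ hk) (by
      simp only [not_le]; exact (Fin.lt_def).mp h2)
    simp only [Finset.mem_sdiff, Finset.mem_insert, Finset.mem_singleton, hQ,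
      Finset.mem_filter, Finset.mem_univ, true_and]
    exact ⟨hk1, by tauto⟩
  have hQcard : Q.card ≤ m + 2 := by
    have : Q.card = ((Finset.univ : Finset (Fin n)).filter fun v : Fin n => (v : ℕ) ≤ m + 1).card := rfl
    by_cases hn : m + 1 < n
    · rw [this, aux_card (m + 1) hn]
    · calc Q.card ≤ (Finset.univ : Finset (Fin n)).card := Finset.card_le_card (Finset.filter_subset _ _)
        _ = n := Finset.card_univ.trans (Fintype.card_fin n)
        _ ≤ m + 2 := by omega
  have hij2 : ({i, j} : Finset (Fin n)).card = 2 := by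
    rw [Finset.card_insert_of_notMem (by simp [Fin.ne_of_lt hij]), Finset.card_singleton]
  have hsubQ : ({i, j} : Finset (Fin n)) ⊆ Q := by
    intro k hk; simp only [Finset.mem_insert, Finset.mem_singleton] at hk
    rcases hk with rfl | rfl <;> assumption
  have hcard := Finset.card_le_card hsub
  rw [Finset.card_sdiff_of_subset hsubQ, hij2, hPcard] at hcard
  omega

theorem stmt15 (n : ℕ) (σ : Equiv.Perm (Fin n)) :
    (Avoids σ p321 ∧ Avoids σ p231) ↔ ∀ i : Fin n, (i : ℕ) ≤ (σ i : ℕ) + 1 := by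
  constructor
  · rintro ⟨h321, h231⟩ i
    by_contra hc
    push_neg at hc
    -- σ i + 1 < i, so at least two positions a < b < i with σ a, σ b > σ i
    set S := (Finset.univ : Finset (Fin n)).filter
      fun j : Fin n => (j : ℕ) < (i : ℕ) ∧ (σ i : ℕ) < (σ j : ℕ) with hS
    have hScard : 2 ≤ S.card := by
      set A := (Finset.univ : Finset (Fin n)).filter fun j : Fin n => (j : ℕ) < (i : ℕ) with hA
      set B := (Finset.univ : Finset (Fin n)).filter fun j => (σ j : ℕ) ≤ (σ i : ℕ) with hB
      have hAcard : A.card = (i : ℕ) := by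
        have hi1 : (i : ℕ) - 1 < n := by omega
        have : A = Finset.univ.filter fun v : Fin n => (v : ℕ) ≤ (i : ℕ) - 1 := by
          ext v; simp [hA]; omega
        rw [this, aux_card _ hi1]; omega
      have hBcard : B.card = (σ i : ℕ) + 1 := by
        rw [hB, aux_perm σ (fun v : Fin n => (v : ℕ) ≤ (σ i : ℕ)), aux_card _ (σ i).isLt]
      have hiB : i ∈ B := by simp [hB]
      have hiA : i ∉ A := by simp [hA]
      have hsub1 : A ∩ B ⊆ B.erase i := by
        intro k hk
        rw [Finset.mem_inter] at hk
        refine Finset.mem_erase.mpr ⟨fun e => hiA (e ▸ hk.1), hk.2⟩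
      have hAB : (A ∩ B).card ≤ (σ i : ℕ) := by
        calc (A ∩ B).card ≤ (B.erase i).card := Finset.card_le_card hsub1
          _ = B.card - 1 := Finset.card_erase_of_mem hiB
          _ = (σ i : ℕ) := by omega
      have hSdiff : A \ B ⊆ S := by
        intro k hk
        rw [Finset.mem_sdiff] at hk
        obtain ⟨hk1, hk2⟩ := hk
        simp only [hA, Finset.mem_filter, Finset.mem_univ, true_and] at hk1
        simp only [hB, Finset.mem_filter, Finset.mem_univ, true_and, not_le] at hk2
        simp only [hS, Finset.mem_filter, Finset.mem_univ, true_and]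
        exact ⟨hk1, hk2⟩
      have := Finset.card_le_card_sdiff_add_card (s := A) (t := B)
      have hsd : (i : ℕ) - ((σ i : ℕ) + 1) ≤ (A \ B).card := by
        have h2 : A.card ≤ (A \ B).card + B.card := by
          calc A.card = (A \ B).card + (A ∩ B).card := (Finset.card_sdiff_add_card_inter A B).symm
            _ ≤ (A \ B).card + B.card := by
                exact Nat.add_le_add_left (Finset.card_le_card (Finset.inter_subset_right)) _
        omega
      have h3 : A.card = (A \ B).card + (A ∩ B).card := (Finset.card_sdiff_add_card_inter A B).symm
      have : 2 ≤ (A \ B).card := by omega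
      calc 2 ≤ (A \ B).card := this
        _ ≤ S.card := Finset.card_le_card hSdiff
    obtain ⟨a, ha, b, hb, hab⟩ := Finset.one_lt_card.mp hScard
    simp only [hS, Finset.mem_filter, Finset.mem_univ, true_and] at ha hb
    obtain ⟨ha1, ha2⟩ := ha
    obtain ⟨hb1, hb2⟩ := hb
    rcases lt_or_gt_of_ne hab with hlt | hlt
    · rcases lt_or_gt_of_ne (fun e : σ a = σ b => hab (σ.injective e)) with hσ | hσ
      · exact h231 ⟨a, b, i, hlt, Fin.lt_def.mpr hb1,
          iff_of_true (by decide) hσ,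
          iff_of_false (by decide) (fun h' => by have := Fin.lt_def.mp h'; omega),
          iff_of_false (by decide) (fun h' => by have := Fin.lt_def.mp h'; omega)⟩
      · exact h321 ⟨a, b, i, hlt, Fin.lt_def.mpr hb1,
          iff_of_false (by decide) (fun h' => absurd hσ (not_lt.mpr h'.le)),
          iff_of_false (by decide) (fun h' => by have := Fin.lt_def.mp h'; omega),
          iff_of_false (by decide) (fun h' => by have := Fin.lt_def.mp h'; omega)⟩
    · rcases lt_or_gt_of_ne (fun e : σ b = σ a => hab (σ.injective e).symm) with hσ | hσ
      · exact h231 ⟨b, a, i, hlt, Fin.lt_def.mpr ha1,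
          iff_of_true (by decide) hσ,
          iff_of_false (by decide) (fun h' => by have := Fin.lt_def.mp h'; omega),
          iff_of_false (by decide) (fun h' => by have := Fin.lt_def.mp h'; omega)⟩
      · exact h321 ⟨b, a, i, hlt, Fin.lt_def.mpr ha1,
          iff_of_false (by decide) (fun h' => absurd hσ (not_lt.mpr h'.le)),
          iff_of_false (by decide) (fun h' => by have := Fin.lt_def.mp h'; omega),
          iff_of_false (by decide) (fun h' => by have := Fin.lt_def.mp h'; omega)⟩
  · intro h
    constructor
    · rintro ⟨i, j, l, hij, hjl, hc1, hc2, hc3⟩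
      -- p321 : σ i > σ j > σ l
      simp only [p321] at hc1 hc2 hc3
      have h1 : σ l < σ i := by
        rcases lt_trichotomy (σ i) (σ l) with h' | h' | h'
        · exact absurd (hc2.mpr h') (by decide)
        · exact absurd (σ.injective h') (Fin.ne_of_lt (hij.trans hjl))
        · exact h'
      have h2 : σ l < σ j := by
        rcases lt_trichotomy (σ j) (σ l) with h' | h' | h'
        · exact absurd (hc3.mpr h') (by decide)
        · exact absurd (σ.injective h') (Fin.ne_of_lt hjl)
        · exact h'
      exact no_low σ h i j l hij hjl h1 h2
    · rintro ⟨i, j, l, hij, hjl, hc1, hc2, hc3⟩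
      simp only [p231] at hc1 hc2 hc3
      have h1 : σ l < σ i := by
        rcases lt_trichotomy (σ i) (σ l) with h' | h' | h'
        · exact absurd (hc2.mpr h') (by decide)
        · exact absurd (σ.injective h') (Fin.ne_of_lt (hij.trans hjl))
        · exact h'
      have h2 : σ l < σ j := by
        rcases lt_trichotomy (σ j) (σ l) with h' | h' | h'
        · exact absurd (hc3.mpr h') (by decide)
        · exact absurd (σ.injective h') (Fin.ne_of_lt hjl)
        · exact h'
      exact no_low σ h i j l hij hjl h1 h2
end

section
/- For all n, ∑_{σ ∈ S_n(321,231)} y^{des(σ)} = ∑_{σ ∈ S_n(321,231)} y^{exc(σ)}, where des(σ) = |{i < n : σ(i) > σ(i+1)}| and exc(σ) = |{i : σ(i) > i}|. -/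
open Finset Polynomial

/-- number of excedances -/
def exc {n : ℕ} (σ : Equiv.Perm (Fin n)) : ℕ :=
  (Finset.univ.filter (fun i : Fin n => i < σ i)).card

/-- number of descents -/
def des {n : ℕ} (σ : Equiv.Perm (Fin n)) : ℕ :=
  (Finset.univ.filter (fun p : Fin n × Fin n =>
    (p.2 : ℕ) = (p.1 : ℕ) + 1 ∧ σ p.2 < σ p.1)).card


lemma pigeon {n : ℕ} (σ : Equiv.Perm (Fin n)) (m : ℕ)
    (h : ∀ k : Fin n, (k : ℕ) ≤ m → (σ k : ℕ) ≤ m) :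
    ∀ k : Fin n, (σ k : ℕ) ≤ m → (k : ℕ) ≤ m := by
  classical
  set T : Finset (Fin n) := univ.filter (fun k => (k : ℕ) ≤ m) with hT
  have hsub : T.image σ ⊆ T := by
    intro x hx
    simp only [hT, Finset.mem_image, Finset.mem_filter, Finset.mem_univ, true_and] at hx ⊢
    obtain ⟨k, hk, rfl⟩ := hx
    exact h k hk
  have him : T.image σ = T :=
    Finset.eq_of_subset_of_card_le hsub
      (le_of_eq (Finset.card_image_of_injective _ σ.injective).symm)
  intro k hk
  have hmem : σ k ∈ T := by simp [hT, hk]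
  rw [← him] at hmem
  obtain ⟨k', hk', he⟩ := Finset.mem_image.mp hmem
  have : k' = k := σ.injective he
  subst this
  simpa [hT] using hk'

lemma des_eq_exc {n : ℕ} (σ : Equiv.Perm (Fin n))
    (h321 : Avoids σ p321) (h231 : Avoids σ p231) : des σ = exc σ := by
  classical
  have H321 : ∀ i j l : Fin n, i < j → j < l → σ j < σ i → σ l < σ j → False := by
    intro i j l hij hjl h1 h2
    exact h321 ⟨i, j, l, hij, hjl,
      iff_of_false (by decide) (asymm h1),
      iff_of_false (by decide) (asymm (h2.trans h1)),
      iff_of_false (by decide) (asymm h2)⟩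
  have H231 : ∀ i j l : Fin n, i < j → j < l → σ i < σ j → σ l < σ i → False := by
    intro i j l hij hjl h1 h2
    exact h231 ⟨i, j, l, hij, hjl,
      iff_of_true (by decide) h1,
      iff_of_false (by decide) (asymm h2),
      iff_of_false (by decide) (asymm (h2.trans h1))⟩
  have hsets : (univ.filter (fun i : Fin n =>
      ∃ h : (i : ℕ) + 1 < n, σ ⟨(i : ℕ) + 1, h⟩ < σ i))
      = univ.filter (fun i : Fin n => i < σ i) := by
    ext i
    simp only [Finset.mem_filter, Finset.mem_univ, true_and]
    constructor
    · rintro ⟨h1, hlt⟩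
      by_contra hc
      rw [not_lt] at hc
      have hc' : (σ i : ℕ) ≤ (i : ℕ) := hc
      by_cases hall : ∀ k : Fin n, (k : ℕ) ≤ (i : ℕ) → (σ k : ℕ) ≤ (i : ℕ)
      · have h2 : ((⟨(i : ℕ) + 1, h1⟩ : Fin n) : ℕ) ≤ (i : ℕ) :=
          pigeon σ (i : ℕ) hall _ (le_trans (le_of_lt hlt) hc')
        simp at h2
      · push_neg at hall
        obtain ⟨k, hk1, hk2⟩ := hall
        have hki : k < i := by
          rcases lt_or_eq_of_le (show k ≤ i from hk1) with h | h
          · exact h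
          · exfalso; rw [h] at hk2; omega
        exact H321 k i ⟨(i : ℕ) + 1, h1⟩ hki (by simp [Fin.lt_def])
          (lt_of_le_of_lt hc' hk2) hlt
    · intro hi
      have hi' : (i : ℕ) < (σ i : ℕ) := hi
      have h1 : (i : ℕ) + 1 < n := lt_of_le_of_lt hi' (σ i).isLt
      refine ⟨h1, ?_⟩
      set i' : Fin n := ⟨(i : ℕ) + 1, h1⟩ with hi'def
      by_contra hc
      rw [not_lt] at hc
      have hne : σ i ≠ σ i' := fun h => by
        have := σ.injective h
        simp [hi'def, Fin.ext_iff] at this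
      have hlt2 : σ i < σ i' := lt_of_le_of_ne hc hne
      by_cases hall : ∀ l : Fin n, (σ l : ℕ) ≤ (i : ℕ) → (l : ℕ) ≤ (i : ℕ)
      · have hall' : ∀ k : Fin n, (k : ℕ) ≤ (i : ℕ) → (σ.symm k : ℕ) ≤ (i : ℕ) := by
          intro k hk
          exact hall (σ.symm k) (by simpa using hk)
        have := pigeon σ.symm (i : ℕ) hall' (σ i) (by simpa using le_refl (i : ℕ))
        omega
      · push_neg at hall
        obtain ⟨l, hl1, hl2⟩ := hall
        have hii' : (σ i' : ℕ) > (i : ℕ) := lt_trans hi' hlt2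
        have hi'l : i' < l := by
          have hne2 : (i' : ℕ) ≠ (l : ℕ) := by
            intro h
            have : i' = l := Fin.ext h
            rw [← this] at hl1
            omega
          simp only [Fin.lt_def, hi'def] at hne2 ⊢
          omega
        exact H231 i i' l (by simp [Fin.lt_def, hi'def]) hi'l hlt2
          (show σ l < σ i from by
            simp only [Fin.lt_def]; omega)
  have hdes : des σ = (univ.filter (fun i : Fin n =>
      ∃ h : (i : ℕ) + 1 < n, σ ⟨(i : ℕ) + 1, h⟩ < σ i)).card := by
    unfold des
    rw [← Finset.card_image_of_injOn (f := Prod.fst) (s := univ.filter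
      (fun p : Fin n × Fin n => (p.2 : ℕ) = (p.1 : ℕ) + 1 ∧ σ p.2 < σ p.1)) ?_]
    · congr 1
      ext i
      simp only [Finset.mem_image, Finset.mem_filter, Finset.mem_univ, true_and, Prod.exists]
      constructor
      · rintro ⟨a, b, ⟨hb, hlt⟩, rfl⟩
        refine ⟨by rw [← hb]; exact b.isLt, ?_⟩
        have : (⟨(a : ℕ) + 1, by rw [← hb]; exact b.isLt⟩ : Fin n) = b := Fin.ext hb.symm
        rw [this]; exact hlt
      · rintro ⟨h1, hlt⟩
        exact ⟨i, ⟨(i : ℕ) + 1, h1⟩, ⟨rfl, hlt⟩, rfl⟩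
    · intro p hp q hq hpq
      simp only [Finset.coe_filter, Set.mem_setOf_eq] at hp hq
      have : p.2 = q.2 := Fin.ext (by rw [hp.2.1, hq.2.1, hpq])
      exact Prod.ext hpq this
  rw [hdes, hsets]; rfl

theorem stmt18 (n : ℕ) :
    (∑ σ ∈ Finset.univ.filter
        (fun σ : Equiv.Perm (Fin n) => Avoids σ p321 ∧ Avoids σ p231),
      (Polynomial.X : Polynomial ℤ) ^ des σ)
      = ∑ σ ∈ Finset.univ.filter
          (fun σ : Equiv.Perm (Fin n) => Avoids σ p321 ∧ Avoids σ p231),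
        (Polynomial.X : Polynomial ℤ) ^ exc σ := by
  apply Finset.sum_congr rfl
  intro σ hσ
  rw [Finset.mem_filter] at hσ
  rw [des_eq_exc σ hσ.2.1 hσ.2.2]
end
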